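/- arXiv:2210.10968 — 16 statements merged into one kernel-verified Lean document; each statement's English description precedes it below -/
import Mathlib

section
/- There exists a unique continuous function φ on [0,1] with φ(0)=0, φ(1)=1 satisfying φ(t) = (β/(α+β))·φ(2t) for t ∈ [0,1/2] and φ(t) = (α/(α+β))·φ(2t−1) + β/(α+β) for t ∈ [1/2,1]; moreover φ is strictly increasing. -/
/-- The defining self-affine system for the interpolation function `φ` associated
with parameters `α, β`. -/
def IsInterp (α β : ℝ) (φ : ℝ → ℝ) : Prop :=
  ContinuousOn φ (Set.Icc 0 1) ∧ φ 0 = 0 ∧ φ 1 = 1 ∧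
  (∀ t ∈ Set.Icc (0 : ℝ) (1 / 2), φ t = β / (α + β) * φ (2 * t)) ∧
  (∀ t ∈ Set.Icc (1 / 2 : ℝ) 1, φ t = α / (α + β) * φ (2 * t - 1) + β / (α + β))

open Set

noncomputable section

namespace InterpAux

abbrev II : Set ℝ := Icc 0 1

def pI (t : ℝ) : II := projIcc 0 1 zero_le_one t

lemma pI_mono : Monotone pI := monotone_projIcc zero_le_one

lemma pI_of_mem {t : ℝ} (ht : t ∈ II) : (pI t : ℝ) = t := by
  simp [pI, projIcc_of_mem zero_le_one ht]

def XS : Set C(II, ℝ) := {f | f (pI 0) = 0 ∧ f (pI 1) = 1}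

variable (a b : ℝ)

/-- raw underlying function of the transfer operator -/
def Tfun (f : C(II, ℝ)) : II → ℝ :=
  fun t => if (t : ℝ) ≤ 1 / 2 then b * f (pI (2 * t)) else a * f (pI (2 * t - 1)) + b

lemma Tfun_cont {f : C(II, ℝ)} (hf : f ∈ XS) : Continuous (Tfun a b f) := by
  apply Continuous.if_le
  · exact continuous_const.mul (f.continuous.comp (continuous_projIcc.comp
      (continuous_const.mul continuous_subtype_val)))
  · exact (continuous_const.mul (f.continuous.comp (continuous_projIcc.comp
      ((continuous_const.mul continuous_subtype_val).sub continuous_const)))).add continuous_const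
  · exact continuous_subtype_val
  · exact continuous_const
  · intro t ht
    have h1 : 2 * (t : ℝ) = 1 := by rw [ht]; norm_num
    rw [h1, show (1:ℝ) - 1 = 0 by norm_num, hf.1, hf.2]
    ring

def T {f : C(II, ℝ)} (hf : f ∈ XS) : C(II, ℝ) := ⟨Tfun a b f, Tfun_cont a b hf⟩

lemma pI_zero : pI 0 = ⟨0, by simp [II]⟩ := projIcc_left zero_le_one
lemma pI_one : pI 1 = ⟨1, by simp [II]⟩ := projIcc_right zero_le_one

lemma T_mem (hab : a + b = 1) {f : C(II, ℝ)} (hf : f ∈ XS) : T a b hf ∈ XS := by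
  constructor
  · show Tfun a b f (pI 0) = 0
    rw [pI_zero]
    simp only [Tfun]
    rw [if_pos (by norm_num), show ((2:ℝ) * ((⟨0, by simp [II]⟩ : II) : ℝ)) = 0 by norm_num, hf.1]
    ring
  · show Tfun a b f (pI 1) = 1
    rw [pI_one]
    simp only [Tfun]
    rw [if_neg (by norm_num), show ((2:ℝ) * ((⟨1, by simp [II]⟩ : II) : ℝ) - 1) = 1 by norm_num, hf.2]
    linarith

def TX (hab : a + b = 1) : ↥(XS) → ↥(XS) := fun f => ⟨T a b f.2, T_mem a b hab f.2⟩


lemma isClosed_XS : IsClosed XS := by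
  have : XS = (fun f : C(II, ℝ) => f (pI 0)) ⁻¹' {0} ∩ (fun f : C(II, ℝ) => f (pI 1)) ⁻¹' {1} := by
    ext f; simp [XS, Set.mem_inter_iff]
  rw [this]
  exact (isClosed_singleton.preimage (continuous_eval_const _)).inter
    (isClosed_singleton.preimage (continuous_eval_const _))

instance : CompleteSpace ↥XS := isClosed_XS.completeSpace_coe

def idmap : C(II, ℝ) := ⟨fun t => (t : ℝ), continuous_subtype_val⟩

lemma idmap_mem : idmap ∈ XS := by
  constructor <;> simp [idmap, pI_zero, pI_one]

instance : Nonempty ↥XS := ⟨⟨idmap, idmap_mem⟩⟩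

lemma TX_lipschitz (ha : 0 < a) (hb : 0 < b) (hab : a + b = 1) :
    LipschitzWith (NNReal.mk (max a b) (le_trans ha.le (le_max_left a b))) (TX a b hab) := by
  rw [lipschitzWith_iff_dist_le_mul]
  intro f g
  rw [Subtype.dist_eq, Subtype.dist_eq]
  have hd : (0 : ℝ) ≤ max a b * dist (f : C(II,ℝ)) (g : C(II,ℝ)) :=
    mul_nonneg (le_trans ha.le (le_max_left a b)) dist_nonneg
  show dist _ _ ≤ max a b * dist (f : C(II,ℝ)) (g : C(II,ℝ))
  apply (ContinuousMap.dist_le hd).2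
  intro t
  show dist (Tfun a b f t) (Tfun a b g t) ≤ _
  simp only [Tfun]
  split_ifs with h
  · rw [Real.dist_eq, ← mul_sub, abs_mul, abs_of_pos hb]
    calc b * |(f : C(II,ℝ)) (pI (2 * t)) - (g : C(II,ℝ)) (pI (2 * t))|
        ≤ b * dist (f : C(II,ℝ)) (g : C(II,ℝ)) := by
          apply mul_le_mul_of_nonneg_left _ hb.le
          rw [← Real.dist_eq]
          exact ContinuousMap.dist_apply_le_dist _
      _ ≤ max a b * dist (f : C(II,ℝ)) (g : C(II,ℝ)) :=
          mul_le_mul_of_nonneg_right (le_max_right a b) dist_nonneg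
  · rw [Real.dist_eq, show a * (f:C(II,ℝ)) (pI (2 * t - 1)) + b - (a * (g:C(II,ℝ)) (pI (2 * t - 1)) + b)
        = a * ((f:C(II,ℝ)) (pI (2 * t - 1)) - (g:C(II,ℝ)) (pI (2 * t - 1))) by ring,
      abs_mul, abs_of_pos ha]
    calc a * |(f : C(II,ℝ)) (pI (2*t-1)) - (g : C(II,ℝ)) (pI (2*t-1))|
        ≤ a * dist (f : C(II,ℝ)) (g : C(II,ℝ)) := by
          apply mul_le_mul_of_nonneg_left _ ha.le
          rw [← Real.dist_eq]
          exact ContinuousMap.dist_apply_le_dist _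
      _ ≤ max a b * dist (f : C(II,ℝ)) (g : C(II,ℝ)) :=
          mul_le_mul_of_nonneg_right (le_max_left a b) dist_nonneg

lemma TX_contracting (ha : 0 < a) (hb : 0 < b) (hab : a + b = 1) :
    ContractingWith (NNReal.mk (max a b) (le_trans ha.le (le_max_left a b))) (TX a b hab) := by
  refine ⟨?_, TX_lipschitz a b ha hb hab⟩
  rw [← NNReal.coe_lt_coe]
  push_cast
  rw [max_lt_iff]
  constructor <;> linarith

lemma le_one_sub {u : II} : u ≤ (⟨1, by simp [II]⟩ : II) := Subtype.mk_le_mk.2 u.2.2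
lemma zero_le_sub {u : II} : (⟨0, by simp [II]⟩ : II) ≤ u := Subtype.mk_le_mk.2 u.2.1

lemma TX_mono (ha : 0 < a) (hb : 0 < b) (hab : a + b = 1) (f : ↥XS)
    (hf : Monotone ⇑(f : C(II, ℝ))) : Monotone ⇑((TX a b hab f : ↥XS) : C(II, ℝ)) := by
  intro s t hst
  have hst' : (s : ℝ) ≤ t := hst
  show Tfun a b f s ≤ Tfun a b f t
  simp only [Tfun]
  have hf1 : (f : C(II,ℝ)) (pI (2 * (s:ℝ))) ≤ 1 := by
    calc (f : C(II,ℝ)) (pI (2 * (s:ℝ))) ≤ (f : C(II,ℝ)) ⟨1, by simp [II]⟩ := hf le_one_sub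
      _ = 1 := by rw [← pI_one]; exact f.2.2
  have hf0 : ∀ u : ℝ, (0:ℝ) ≤ (f : C(II,ℝ)) (pI u) := by
    intro u
    calc (0:ℝ) = (f : C(II,ℝ)) (pI 0) := f.2.1.symm
      _ ≤ (f : C(II,ℝ)) (pI u) := by rw [pI_zero]; exact hf zero_le_sub
  split_ifs with h1 h2 h2
  · exact mul_le_mul_of_nonneg_left (hf (pI_mono (by linarith))) hb.le
  · have l1 : b * (f : C(II,ℝ)) (pI (2 * (s:ℝ))) ≤ b := by
      nlinarith
    have l2 : (0:ℝ) ≤ a * (f : C(II,ℝ)) (pI (2 * (t:ℝ) - 1)) :=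
      mul_nonneg ha.le (hf0 _)
    linarith
  · linarith
  · have := hf (pI_mono (show 2*(s:ℝ) - 1 ≤ 2*(t:ℝ) - 1 by linarith))
    nlinarith

end InterpAux

open Set

/-- There exists a unique continuous function `φ` on `[0,1]` with `φ 0 = 0`, `φ 1 = 1`
satisfying the self-affine system; moreover `φ` is strictly increasing on `[0,1]`. -/
theorem exists_unique_interp (α β : ℝ) (hα : 0 < α) (hβ : 0 < β) :
    ∃ φ : ℝ → ℝ, IsInterp α β φ ∧ StrictMonoOn φ (Set.Icc 0 1) ∧
      ∀ ψ : ℝ → ℝ, IsInterp α β ψ → Set.EqOn ψ φ (Set.Icc 0 1) := by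
  classical
  open InterpAux in
  set a := α / (α + β) with hadef
  set b := β / (α + β) with hbdef
  have hab0 : (0:ℝ) < α + β := by linarith
  have ha : 0 < a := div_pos hα hab0
  have hb : 0 < b := div_pos hβ hab0
  have hab : a + b = 1 := by rw [hadef, hbdef]; field_simp
  set C := InterpAux.TX_contracting a b ha hb hab with hC
  set φX : ↥InterpAux.XS := ContractingWith.fixedPoint (InterpAux.TX a b hab) C with hφX
  have hfix : InterpAux.TX a b hab φX = φX := C.fixedPoint_isFixedPt
  set φ : ℝ → ℝ := fun t => (φX : C(InterpAux.II, ℝ)) (InterpAux.pI t) with hφdef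
  have heval : ∀ t : ℝ, ∀ ht : t ∈ InterpAux.II,
      φ t = InterpAux.Tfun a b (φX : C(InterpAux.II, ℝ)) ⟨t, ht⟩ := by
    intro t ht
    have hp : InterpAux.pI t = ⟨t, ht⟩ := Subtype.ext (InterpAux.pI_of_mem ht)
    calc φ t = (φX : C(InterpAux.II, ℝ)) ⟨t, ht⟩ := by
          show (φX : C(InterpAux.II, ℝ)) (InterpAux.pI t) = _
          rw [hp]
      _ = ((InterpAux.TX a b hab φX : ↥InterpAux.XS) : C(InterpAux.II, ℝ)) ⟨t, ht⟩ := by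
          rw [hfix]
      _ = _ := rfl
  have hφ0 : φ 0 = 0 := φX.2.1
  have hφ1 : φ 1 = 1 := φX.2.2
  have h1 : ∀ t ∈ Set.Icc (0:ℝ) (1/2), φ t = b * φ (2 * t) := by
    intro t ht
    have htI : t ∈ InterpAux.II := ⟨ht.1, by linarith [ht.2]⟩
    rw [heval t htI]
    simp only [InterpAux.Tfun]
    rw [if_pos (show ((⟨t, htI⟩ : InterpAux.II) : ℝ) ≤ 1/2 from ht.2)]
  have h2 : ∀ t ∈ Set.Icc (1/2 : ℝ) 1, φ t = a * φ (2 * t - 1) + b := by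
    intro t ht
    rcases eq_or_lt_of_le ht.1 with heq | hlt
    · subst heq
      rw [h1 (1/2) (by norm_num)]
      norm_num [hφ0, hφ1]
    · have htI : t ∈ InterpAux.II := ⟨by linarith [ht.1], ht.2⟩
      rw [heval t htI]
      simp only [InterpAux.Tfun]
      rw [if_neg (show ¬ ((⟨t, htI⟩ : InterpAux.II) : ℝ) ≤ 1/2 by push_neg; exact hlt)]
  have hcont : ContinuousOn φ (Set.Icc 0 1) :=
    ((φX : C(InterpAux.II, ℝ)).continuous.comp continuous_projIcc).continuousOn
  -- monotonicity of the fixed point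
  have hmonoX : Monotone ⇑(φX : C(InterpAux.II, ℝ)) := by
    have hiter : ∀ n : ℕ, Monotone
        ⇑((((InterpAux.TX a b hab)^[n] ⟨InterpAux.idmap, InterpAux.idmap_mem⟩ : ↥InterpAux.XS))
          : C(InterpAux.II, ℝ)) := by
      intro n
      induction n with
      | zero => exact fun u v huv => (Subtype.coe_le_coe.2 huv : (u:ℝ) ≤ v)
      | succ n ih =>
        rw [Function.iterate_succ_apply']
        exact InterpAux.TX_mono a b ha hb hab _ ih
    intro s t hst
    have hlim := C.tendsto_iterate_fixedPoint ⟨InterpAux.idmap, InterpAux.idmap_mem⟩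
    have conteval : ∀ u : InterpAux.II,
        Continuous (fun g : ↥InterpAux.XS => (g : C(InterpAux.II, ℝ)) u) := fun u =>
      (continuous_eval_const u).comp continuous_subtype_val
    exact le_of_tendsto_of_tendsto' (((conteval s).tendsto _).comp hlim)
      (((conteval t).tendsto _).comp hlim) (fun n => hiter n hst)
  have hmono : MonotoneOn φ (Set.Icc 0 1) := by
    intro u hu v hv huv
    have h := hmonoX (show (⟨u, hu⟩ : InterpAux.II) ≤ ⟨v, hv⟩ from huv)
    have hpu : InterpAux.pI u = ⟨u, hu⟩ := Subtype.ext (InterpAux.pI_of_mem hu)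
    have hpv : InterpAux.pI v = ⟨v, hv⟩ := Subtype.ext (InterpAux.pI_of_mem hv)
    rw [hφdef]; simp only [hpu, hpv]; exact h
  -- strictness on dyadic points
  have dyadic : ∀ n : ℕ, ∀ k : ℕ, k < 2^n → φ ((k:ℝ)/2^n) < φ (((k:ℝ)+1)/2^n) := by
    intro n
    induction n with
    | zero =>
      intro k hk
      interval_cases k
      norm_num [hφ0, hφ1]
    | succ n ih =>
      intro k hk
      have h2n : (0:ℝ) < 2^n := by positivity
      have h2n1 : (0:ℝ) < 2^(n+1) := by positivity
      have hpow : (2:ℝ)^(n+1) = 2 * 2^n := by ring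
      rcases le_or_gt (k+1) (2^n) with h | h
      · have hk' : ((k:ℝ)+1) ≤ 2^n := by exact_mod_cast h
        have mem1 : (k:ℝ)/2^(n+1) ∈ Set.Icc (0:ℝ) (1/2) :=
          ⟨by positivity, by rw [div_le_iff₀ h2n1]; linarith⟩
        have mem2 : ((k:ℝ)+1)/2^(n+1) ∈ Set.Icc (0:ℝ) (1/2) :=
          ⟨by positivity, by rw [div_le_iff₀ h2n1]; linarith⟩
        rw [h1 _ mem1, h1 _ mem2, show 2*((k:ℝ)/2^(n+1)) = (k:ℝ)/2^n by ring,
          show 2*(((k:ℝ)+1)/2^(n+1)) = ((k:ℝ)+1)/2^n by ring]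
        exact mul_lt_mul_of_pos_left (ih k (by omega)) hb
      · have hle : 2^n ≤ k := by omega
        have hkR : (2:ℝ)^n ≤ (k:ℝ) := by exact_mod_cast hle
        have hkR2 : (k:ℝ) + 1 ≤ 2^(n+1) := by exact_mod_cast hk
        set j : ℕ := k - 2^n with hj
        have hjk : (k:ℝ) = (j:ℝ) + 2^n := by
          rw [hj]; push_cast [Nat.cast_sub hle]; ring
        have mem1 : (k:ℝ)/2^(n+1) ∈ Set.Icc (1/2 : ℝ) 1 :=
          ⟨by rw [le_div_iff₀ h2n1]; linarith,
           by rw [div_le_one h2n1]; linarith⟩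
        have mem2 : ((k:ℝ)+1)/2^(n+1) ∈ Set.Icc (1/2 : ℝ) 1 :=
          ⟨by rw [le_div_iff₀ h2n1]; linarith,
           by rw [div_le_one h2n1]; linarith⟩
        rw [h2 _ mem1, h2 _ mem2, hjk,
          show 2*(((j:ℝ)+2^n)/2^(n+1)) - 1 = (j:ℝ)/2^n by rw [pow_succ]; field_simp; ring,
          show 2*((((j:ℝ)+2^n)+1)/2^(n+1)) - 1 = ((j:ℝ)+1)/2^n by rw [pow_succ]; field_simp; ring]
        have := ih j (by omega)
        nlinarith
  have smono : StrictMonoOn φ (Set.Icc 0 1) := by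
    intro s hs t ht hst
    obtain ⟨n, hn⟩ : ∃ n : ℕ, 2/(t-s) < 2^n := pow_unbounded_of_one_lt _ one_lt_two
    have h2n : (0:ℝ) < 2^n := by positivity
    have hn' : 2/2^n < t - s := by
      rw [div_lt_iff₀ (by linarith : (0:ℝ) < t - s)] at hn
      rw [div_lt_iff₀ h2n]
      linarith
    set m : ℕ := ⌈s * 2^n⌉₊ with hm
    have hsm : s * 2^n ≤ m := Nat.le_ceil _
    have hms : (m:ℝ) < s * 2^n + 1 := Nat.ceil_lt_add_one (mul_nonneg hs.1 h2n.le)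
    have hs_le : s ≤ (m:ℝ)/2^n := by rw [le_div_iff₀ h2n]; exact hsm
    have hlt : ((m:ℝ)+1)/2^n < t := by
      have key : 2 < (t-s)*2^n := by rw [← div_lt_iff₀ h2n]; exact hn'
      rw [div_lt_iff₀ h2n]
      nlinarith [key, hms]
    have hmlt : ((m:ℝ)+1) < 2^n := by
      rw [div_lt_iff₀ h2n] at hlt
      nlinarith [mul_le_mul_of_nonneg_right ht.2 h2n.le]
    have hm2 : m < 2^n := by
      have h' : ((m:ℝ)) < ((2^n : ℕ) : ℝ) := by push_cast; linarith
      exact_mod_cast h'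
    have hm2R : (m:ℝ) + 1 ≤ 2^n := by
      have h' : (m+1 : ℕ) ≤ 2^n := hm2
      calc (m:ℝ) + 1 = ((m+1 : ℕ) : ℝ) := by push_cast; ring
        _ ≤ ((2^n : ℕ) : ℝ) := by exact_mod_cast h'
        _ = 2^n := by push_cast; ring
    have mem1 : (m:ℝ)/2^n ∈ Set.Icc (0:ℝ) 1 :=
      ⟨by positivity, by rw [div_le_one h2n]; linarith⟩
    have mem2 : ((m:ℝ)+1)/2^n ∈ Set.Icc (0:ℝ) 1 :=
      ⟨by positivity, by rw [div_le_one h2n]; linarith⟩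
    calc φ s ≤ φ ((m:ℝ)/2^n) := hmono hs mem1 hs_le
      _ < φ (((m:ℝ)+1)/2^n) := dyadic n m hm2
      _ ≤ φ t := hmono mem2 ht hlt.le
  refine ⟨φ, ⟨hcont, hφ0, hφ1, h1, h2⟩, smono, ?_⟩
  -- uniqueness
  intro ψ hψ
  obtain ⟨hψc, hψ0, hψ1, hψ4, hψ5⟩ := hψ
  set ψC : C(InterpAux.II, ℝ) := ⟨InterpAux.II.restrict ψ, hψc.restrict⟩ with hψC
  have hmem : ψC ∈ InterpAux.XS := by
    constructor
    · rw [InterpAux.pI_zero]; exact hψ0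
    · rw [InterpAux.pI_one]; exact hψ1
  have hfixψ : InterpAux.TX a b hab ⟨ψC, hmem⟩ = ⟨ψC, hmem⟩ := by
    apply Subtype.ext
    apply ContinuousMap.ext
    intro t
    show InterpAux.Tfun a b ψC t = ψC t
    simp only [InterpAux.Tfun]
    split_ifs with h
    · have hmem2 : 2 * (t:ℝ) ∈ InterpAux.II := ⟨by linarith [t.2.1], by linarith⟩
      have hp : InterpAux.pI (2 * (t:ℝ)) = ⟨2*(t:ℝ), hmem2⟩ :=
        Subtype.ext (InterpAux.pI_of_mem hmem2)
      rw [hp]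
      have := hψ4 (t:ℝ) ⟨t.2.1, h⟩
      simp only [hψC]
      exact this.symm
    · push_neg at h
      have hmem2 : 2 * (t:ℝ) - 1 ∈ InterpAux.II := ⟨by linarith, by linarith [t.2.2]⟩
      have hp : InterpAux.pI (2 * (t:ℝ) - 1) = ⟨2*(t:ℝ)-1, hmem2⟩ :=
        Subtype.ext (InterpAux.pI_of_mem hmem2)
      rw [hp]
      have := hψ5 (t:ℝ) ⟨h.le, t.2.2⟩
      simp only [hψC]
      exact this.symm
  have huniq : (⟨ψC, hmem⟩ : ↥InterpAux.XS) = φX := C.fixedPoint_unique hfixψ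
  intro t ht
  have hp : InterpAux.pI t = ⟨t, ht⟩ := Subtype.ext (InterpAux.pI_of_mem ht)
  calc ψ t = ψC ⟨t, ht⟩ := rfl
    _ = (φX : C(InterpAux.II, ℝ)) ⟨t, ht⟩ := by rw [← huniq]
    _ = φ t := by rw [hφdef]; simp [hp]
end
end

section
/- For α, β > 0, define φ(Σ_{k≥1} 2^{−e_k}) := Σ_{k≥1} α^{k−1} β^{e_k−k+1} / (α+β)^{e_k} for any finite or infinite strictly increasing sequence 1 ≤ e₁ < e₂ < ⋯. Then φ is well defined on [0,1]: the two binary representations of any dyadic rational give the same value. -/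
/-- Well-definedness of the digital-sum formula for `φ`: the finite and the infinite
binary representation of a dyadic rational `t = Σ_{k≥1} 2^{−e_k}` yield the same value
`Σ_{k≥1} α^{k−1} β^{e_k−k+1} / (α+β)^{e_k}`.  With 0-indexed exponents
`e : ℕ → ℕ` (strictly increasing, `e i > i`), replacing the last term of the finite
representation of length `K` by the corresponding infinite tail gives the same sum. -/
theorem phi_digital_sum_well_defined (α β : ℝ) (hα : 0 < α) (hβ : 0 < β)
    (K : ℕ) (hK : 1 ≤ K) (e : ℕ → ℕ) (he : StrictMono e) (he' : ∀ i, i < e i) :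
    ∑ i ∈ Finset.range K, α ^ i * β ^ (e i - i) / (α + β) ^ (e i)
      = (∑ i ∈ Finset.range (K - 1), α ^ i * β ^ (e i - i) / (α + β) ^ (e i))
        + ∑' j : ℕ,
            α ^ (K - 1 + j) * β ^ (e (K - 1) - (K - 1) + 1)
              / (α + β) ^ (e (K - 1) + j + 1) := by
  obtain ⟨m, rfl⟩ : ∃ m, K = m + 1 := ⟨K - 1, (Nat.succ_pred_eq_of_pos hK).symm⟩
  simp only [Nat.add_sub_cancel]
  rw [Finset.sum_range_succ]
  congr 1
  have hab : 0 < α + β := by linarith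
  have hab' : (α + β) ≠ 0 := ne_of_gt hab
  have key : ∀ j : ℕ, α ^ (m + j) * β ^ (e m - m + 1) / (α + β) ^ (e m + j + 1)
      = (α ^ m * β ^ (e m - m + 1) / (α + β) ^ (e m + 1)) * (α / (α + β)) ^ j := by
    intro j
    rw [pow_add α, div_pow, show e m + j + 1 = (e m + 1) + j by ring, pow_add]
    field_simp
    ring
  rw [tsum_congr key, tsum_mul_left,
    tsum_geometric_of_lt_one (by positivity) (by rw [div_lt_one hab]; linarith)]
  have h1 : 1 - α / (α + β) = β / (α + β) := by field_simp; ring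
  rw [h1, inv_div, pow_succ β]
  field_simp
  ring
end

section
/- Let α, β > 0 and let φ be the unique continuous solution of φ(t) = (β/(α+β))φ(2t) on [0,1/2], φ(t) = β/(α+β) + (α/(α+β))φ(2t−1) on [1/2,1] with φ(0)=0, φ(1)=1. If t = Σ_{j=1}^{N} b_j 2^{−j} is a dyadic rational in [0,1) with digits b_j ∈ {0,1} and s := Σ_{j=1}^{N} b_j, then φ(t + 2^{−N}) − φ(t) = α^s β^{N−s} / (α+β)^N. -/
lemma dyadic_sum_nonneg (N : ℕ) (b : ℕ → Bool) :
    0 ≤ ∑ j ∈ Finset.range N, (if b j then ((1 : ℝ) / 2) ^ (j + 1) else 0) :=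
  Finset.sum_nonneg fun j _ => by positivity

lemma geom_half (N : ℕ) :
    ∑ j ∈ Finset.range N, ((1 : ℝ) / 2) ^ (j + 1) = 1 - (1 / 2) ^ N := by
  induction N with
  | zero => simp
  | succ n ih => rw [Finset.sum_range_succ, ih]; ring

lemma dyadic_sum_le (N : ℕ) (b : ℕ → Bool) :
    (∑ j ∈ Finset.range N, (if b j then ((1 : ℝ) / 2) ^ (j + 1) else 0))
      + (1 / 2) ^ N ≤ 1 := by
  have h : (∑ j ∈ Finset.range N, (if b j then ((1 : ℝ) / 2) ^ (j + 1) else 0))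
      ≤ ∑ j ∈ Finset.range N, ((1 : ℝ) / 2) ^ (j + 1) :=
    Finset.sum_le_sum fun j _ => by split; exacts [le_rfl, by positivity]
  rw [geom_half] at h; linarith

/-- If `t = Σ_{j=1}^{N} b_j 2^{−j}` is a dyadic rational in `[0,1)` with digits
`b_j ∈ {0,1}` and `s` ones among them, then
`φ(t + 2^{−N}) − φ(t) = α^s β^{N−s} / (α+β)^N`. -/
theorem phi_dyadic_increment (α β : ℝ) (hα : 0 < α) (hβ : 0 < β)
    (φ : ℝ → ℝ) (hφ : IsInterp α β φ)
    (N : ℕ) (b : ℕ → Bool) :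
    φ ((∑ j ∈ Finset.range N, if b j then ((1 : ℝ) / 2) ^ (j + 1) else 0)
          + (1 / 2) ^ N)
      - φ (∑ j ∈ Finset.range N, if b j then ((1 : ℝ) / 2) ^ (j + 1) else 0)
      = α ^ ((Finset.range N).filter (fun j => b j = true)).card
          * β ^ (N - ((Finset.range N).filter (fun j => b j = true)).card)
          / (α + β) ^ N := by
  obtain ⟨-, h0, h1, hL, hR⟩ := hφ
  have hab : (0:ℝ) < α + β := by linarith
  induction N generalizing b with
  | zero => simp [h0, h1]
  | succ N ih =>
    have hb' : ∀ j, b (j + 1) = (fun j => b (j + 1)) j := fun _ => rfl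
    set b' : ℕ → Bool := fun j => b (j + 1) with hb'def
    set T : ℝ := ∑ j ∈ Finset.range N, (if b' j then ((1 : ℝ) / 2) ^ (j + 1) else 0) with hT
    set s : ℕ := ((Finset.range N).filter (fun j => b' j = true)).card with hs
    have hsle : s ≤ N := le_trans (Finset.card_filter_le _ _) (by simp)
    have hsum : (∑ j ∈ Finset.range (N + 1),
        (if b j then ((1 : ℝ) / 2) ^ (j + 1) else 0))
        = (if b 0 then (1:ℝ)/2 else 0) + (1/2) * T := by
      rw [Finset.sum_range_succ' _ N, add_comm]
      congr 1
      · norm_num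
      · rw [hT, Finset.mul_sum]
        refine Finset.sum_congr rfl fun j _ => ?_
        simp only [hb'def]; split <;> ring
    have hcard : ((Finset.range (N + 1)).filter (fun j => b j = true)).card
        = s + (if b 0 then 1 else 0) := by
      rw [Finset.card_filter, Finset.sum_range_succ' _ N, hs, Finset.card_filter]
    have hT0 : 0 ≤ T := dyadic_sum_nonneg N b'
    have hT1 : T + (1/2)^N ≤ 1 := dyadic_sum_le N b'
    have hp : (0:ℝ) < (1/2)^N := by positivity
    have ihT := ih b'
    rw [← hT, ← hs] at ihT
    rw [hsum, hcard]
    cases hb0 : b 0 with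
    | false =>
      simp only [hb0, Bool.false_eq_true, if_false, zero_add, Nat.add_zero]
      have e1 : (1/2) * T + (1/2)^(N+1) = (1/2) * (T + (1/2)^N) := by ring
      have m1 : (1/2) * (T + (1/2)^N) ∈ Set.Icc (0:ℝ) (1/2) := by
        constructor <;> [positivity; linarith]
      have m2 : (1/2) * T ∈ Set.Icc (0:ℝ) (1/2) := by
        constructor <;> [positivity; linarith]
      rw [e1, hL _ m1, hL _ m2]
      have e2 : 2 * ((1/2) * (T + (1/2)^N)) = T + (1/2)^N := by ring
      have e3 : 2 * ((1/2) * T) = T := by ring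
      rw [e2, e3, ← mul_sub, ihT, Nat.succ_sub hsle, pow_succ (α+β), pow_succ β]
      field_simp
    | true =>
      simp only [hb0, if_true]
      have e1 : (1/2:ℝ) + (1/2) * T + (1/2)^(N+1) = (1/2) * (T + (1/2)^N) + 1/2 := by ring
      have m1 : (1/2) * (T + (1/2)^N) + 1/2 ∈ Set.Icc (1/2:ℝ) 1 := by
        constructor <;> linarith
      have m2 : (1/2:ℝ) + (1/2) * T ∈ Set.Icc (1/2:ℝ) 1 := by
        constructor <;> linarith
      rw [e1, hR _ m1, hR _ m2]
      have e2 : 2 * ((1/2) * (T + (1/2)^N) + 1/2) - 1 = T + (1/2)^N := by ring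
      have e3 : 2 * ((1/2:ℝ) + (1/2) * T) - 1 = T := by ring
      rw [e2, e3]
      have key : α / (α+β) * φ (T + (1/2)^N) + β/(α+β)
          - (α/(α+β) * φ T + β/(α+β)) = α/(α+β) * (φ (T + (1/2)^N) - φ T) := by ring
      rw [key, ihT]
      have hns : N + 1 - (s + 1) = N - s := by omega
      rw [hns, pow_succ (α+β), pow_succ α]
      field_simp
end

section
/- Let α, β > 0 and φ the unique continuous solution of the self-affine system φ(t) = (β/(α+β))φ(2t) on [0,1/2], φ(t) = β/(α+β) + (α/(α+β))φ(2t−1) on [1/2,1] with φ(0)=0, φ(1)=1. Then ∫₀¹ φ(x) dx = β/(α+β). -/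
/-- `∫₀¹ φ(x) dx = β/(α+β)`. -/
theorem integral_phi (α β : ℝ) (hα : 0 < α) (hβ : 0 < β)
    (φ : ℝ → ℝ) (hφ : IsInterp α β φ) :
    ∫ x in (0 : ℝ)..1, φ x = β / (α + β) := by
  obtain ⟨hc, h0, h1, hL, hR⟩ := hφ
  have hab : α + β ≠ 0 := by positivity
  have hint : IntervalIntegrable φ MeasureTheory.volume 0 1 := by
    apply ContinuousOn.intervalIntegrable
    rwa [Set.uIcc_of_le (by norm_num)]
  have hint1 : IntervalIntegrable φ MeasureTheory.volume 0 (1/2) := by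
    apply hint.mono_set
    rw [Set.uIcc_of_le (by norm_num), Set.uIcc_of_le (by norm_num : (0:ℝ) ≤ 1)]
    exact Set.Icc_subset_Icc le_rfl (by norm_num)
  have hint2 : IntervalIntegrable φ MeasureTheory.volume (1/2) 1 := by
    apply hint.mono_set
    rw [Set.uIcc_of_le (by norm_num), Set.uIcc_of_le (by norm_num : (0:ℝ) ≤ 1)]
    exact Set.Icc_subset_Icc (by norm_num) le_rfl
  set I := ∫ x in (0:ℝ)..1, φ x with hI
  have hsplit : I = (∫ x in (0:ℝ)..(1/2), φ x) + ∫ x in (1/2:ℝ)..1, φ x :=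
    (intervalIntegral.integral_add_adjacent_intervals hint1 hint2).symm
  have e1 : ∫ x in (0:ℝ)..(1/2), φ x = β/(α+β) * (2⁻¹ * I) := by
    rw [intervalIntegral.integral_congr (g := fun x => β/(α+β) * φ (2*x))
      (by rw [Set.uIcc_of_le (by norm_num)]; exact fun x hx => hL x hx)]
    rw [intervalIntegral.integral_const_mul,
      intervalIntegral.integral_comp_mul_left φ (two_ne_zero)]
    norm_num [hI]
  have e2 : ∫ x in (1/2:ℝ)..1, φ x = α/(α+β) * (2⁻¹ * I) + 2⁻¹ * (β/(α+β)) := by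
    rw [intervalIntegral.integral_congr
      (g := fun x => α/(α+β) * φ (2*x - 1) + β/(α+β))
      (by rw [Set.uIcc_of_le (by norm_num)]; exact fun x hx => hR x hx)]
    have hi : IntervalIntegrable (fun x => α/(α+β) * φ (2*x - 1))
        MeasureTheory.volume (1/2) 1 := by
      apply ContinuousOn.intervalIntegrable
      apply ContinuousOn.mul continuousOn_const
      apply hc.comp (by fun_prop)
      intro x hx
      rw [Set.uIcc_of_le (by norm_num)] at hx
      simp only [Set.mem_Icc] at hx ⊢
      constructor <;> linarith [hx.1, hx.2]
    rw [intervalIntegral.integral_add hi intervalIntegrable_const,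
      intervalIntegral.integral_const_mul,
      intervalIntegral.integral_comp_mul_sub φ (two_ne_zero) 1,
      intervalIntegral.integral_const]
    norm_num [hI]
  have h2 : β/(α+β) * (2⁻¹ * I) + α/(α+β) * (2⁻¹ * I) = 2⁻¹ * I := by
    field_simp
    ring
  linarith [hsplit, e1, e2, h2]
end

section
/- Let α, β > 0, λ := log₂((α+β)/max(α,β)) ∈ (0,1], and φ the interpolation function for (α,β). Then φ is Hölder continuous with exponent λ on [0,1]: there is a constant C such that |φ(y) − φ(x)| ≤ C|y−x|^λ for all x, y ∈ [0,1]. -/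
lemma dyadic_bound (α β : ℝ) (hα : 0 < α) (hβ : 0 < β) (φ : ℝ → ℝ)
    (hL : ∀ t ∈ Set.Icc (0 : ℝ) (1 / 2), φ t = β / (α + β) * φ (2 * t))
    (hR : ∀ t ∈ Set.Icc (1 / 2 : ℝ) 1, φ t = α / (α + β) * φ (2 * t - 1) + β / (α + β))
    (M : ℝ) (hM : ∀ u ∈ Set.Icc (0:ℝ) 1, ∀ v ∈ Set.Icc (0:ℝ) 1, |φ u - φ v| ≤ M) :
    ∀ n k : ℕ, k < 2 ^ n →
      ∀ t ∈ Set.Icc ((k : ℝ) / 2 ^ n) ((k + 1) / 2 ^ n),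
      ∀ s ∈ Set.Icc ((k : ℝ) / 2 ^ n) ((k + 1) / 2 ^ n),
      |φ t - φ s| ≤ M * (max α β / (α + β)) ^ n := by
  have hab : (0:ℝ) < α + β := by linarith
  have hmax : (0:ℝ) < max α β := lt_max_iff.2 (Or.inl hα)
  have hM0 : 0 ≤ M := by
    have := hM 0 (by constructor <;> norm_num) 0 (by constructor <;> norm_num)
    simpa using this.trans' (abs_nonneg _)
  intro n
  induction n with
  | zero =>
    intro k hk t ht s hs
    interval_cases k
    simp only [pow_zero, mul_one]
    norm_num at ht hs
    exact hM t ht s hs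
  | succ n ih =>
    intro k hk t ht s hs
    have h2n : (0:ℝ) < 2 ^ n := by positivity
    have h2n1 : (0:ℝ) < 2 ^ (n+1) := by positivity
    rcases lt_or_ge k (2 ^ n) with hkn | hkn
    · -- left half
      have hub : ((k:ℝ) + 1) / 2 ^ (n+1) ≤ 1 / 2 := by
        rw [div_le_div_iff₀ h2n1 (by norm_num)]
        have : ((k:ℝ) + 1) ≤ 2 ^ n := by exact_mod_cast Nat.succ_le_of_lt hkn
        calc ((k:ℝ)+1) * 2 ≤ 2^n * 2 := by linarith
          _ = 1 * 2 ^ (n+1) := by ring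
      have hlb : (0:ℝ) ≤ (k:ℝ) / 2 ^ (n+1) := by positivity
      have htI : t ∈ Set.Icc (0:ℝ) (1/2) := ⟨hlb.trans ht.1, ht.2.trans hub⟩
      have hsI : s ∈ Set.Icc (0:ℝ) (1/2) := ⟨hlb.trans hs.1, hs.2.trans hub⟩
      have e1 : (k:ℝ) / 2 ^ n = 2 * ((k:ℝ) / 2 ^ (n+1)) := by
        field_simp; ring
      have e2 : ((k:ℝ) + 1) / 2 ^ n = 2 * (((k:ℝ) + 1) / 2 ^ (n+1)) := by
        field_simp; ring
      have h2t : 2 * t ∈ Set.Icc ((k : ℝ) / 2 ^ n) ((k + 1) / 2 ^ n) :=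
        ⟨by rw [e1]; linarith [ht.1], by rw [e2]; linarith [ht.2]⟩
      have h2s : 2 * s ∈ Set.Icc ((k : ℝ) / 2 ^ n) ((k + 1) / 2 ^ n) :=
        ⟨by rw [e1]; linarith [hs.1], by rw [e2]; linarith [hs.2]⟩
      have := ih k hkn (2*t) h2t (2*s) h2s
      rw [hL t htI, hL s hsI, ← mul_sub, abs_mul, abs_of_nonneg (by positivity : (0:ℝ) ≤ β/(α+β))]
      have hble : β / (α + β) ≤ max α β / (α + β) := by
        apply div_le_div_of_nonneg_right <;> first | exact le_max_right α β | positivity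
      calc β/(α+β) * |φ (2*t) - φ (2*s)| ≤ (max α β/(α+β)) * (M * (max α β/(α+β))^n) := by
            apply mul_le_mul hble this (abs_nonneg _) (by positivity)
        _ = M * (max α β/(α+β)) ^ (n+1) := by ring
    · -- right half
      set j := k - 2 ^ n with hj
      have hjk : k = j + 2 ^ n := by omega
      have hjn : j < 2 ^ n := by
        have : k < 2 ^ (n+1) := hk
        omega
      have hkcast : (k:ℝ) = (j:ℝ) + 2 ^ n := by
        rw [hjk]; push_cast; ring
      have hlb : (1:ℝ)/2 ≤ (k:ℝ) / 2 ^ (n+1) := by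
        rw [div_le_div_iff₀ (by norm_num) h2n1, hkcast]
        have : (0:ℝ) ≤ (j:ℝ) := Nat.cast_nonneg j
        calc (1:ℝ) * 2 ^ (n+1) = 2 ^ n * 2 := by ring
          _ ≤ ((j:ℝ) + 2 ^ n) * 2 := by linarith
      have hub : ((k:ℝ) + 1) / 2 ^ (n+1) ≤ 1 := by
        rw [div_le_one h2n1]
        have : (k:ℝ) + 1 ≤ 2 ^ (n+1) := by exact_mod_cast Nat.succ_le_of_lt hk
        linarith
      have htI : t ∈ Set.Icc (1/2 : ℝ) 1 := ⟨hlb.trans ht.1, ht.2.trans hub⟩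
      have hsI : s ∈ Set.Icc (1/2 : ℝ) 1 := ⟨hlb.trans hs.1, hs.2.trans hub⟩
      have e1 : (j:ℝ) / 2 ^ n = 2 * ((k:ℝ) / 2 ^ (n+1)) - 1 := by
        rw [hkcast]; field_simp; ring
      have e2 : ((j:ℝ) + 1) / 2 ^ n = 2 * (((k:ℝ) + 1) / 2 ^ (n+1)) - 1 := by
        rw [hkcast]; field_simp; ring
      have h2t : 2 * t - 1 ∈ Set.Icc ((j : ℝ) / 2 ^ n) ((j + 1) / 2 ^ n) :=
        ⟨by rw [e1]; linarith [ht.1], by rw [e2]; linarith [ht.2]⟩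
      have h2s : 2 * s - 1 ∈ Set.Icc ((j : ℝ) / 2 ^ n) ((j + 1) / 2 ^ n) :=
        ⟨by rw [e1]; linarith [hs.1], by rw [e2]; linarith [hs.2]⟩
      have := ih j hjn (2*t-1) h2t (2*s-1) h2s
      have heq : φ t - φ s = α/(α+β) * (φ (2*t-1) - φ (2*s-1)) := by
        rw [hR t htI, hR s hsI]; ring
      rw [heq, abs_mul, abs_of_nonneg (by positivity : (0:ℝ) ≤ α/(α+β))]
      have hale : α / (α + β) ≤ max α β / (α + β) := by
        apply div_le_div_of_nonneg_right <;> first | exact le_max_left α β | positivity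
      calc α/(α+β) * |φ (2*t-1) - φ (2*s-1)| ≤ (max α β/(α+β)) * (M * (max α β/(α+β))^n) := by
            apply mul_le_mul hale this (abs_nonneg _) (by positivity)
        _ = M * (max α β/(α+β)) ^ (n+1) := by ring

/-- With `λ := log₂((α+β)/max(α,β)) ∈ (0,1]`, the interpolation function `φ` is
Hölder continuous with exponent `λ` on `[0,1]`. -/
theorem phi_holder (α β : ℝ) (hα : 0 < α) (hβ : 0 < β)
    (φ : ℝ → ℝ) (hφ : IsInterp α β φ) :
    0 < Real.logb 2 ((α + β) / max α β) ∧ Real.logb 2 ((α + β) / max α β) ≤ 1 ∧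
    ∃ C : ℝ, ∀ x ∈ Set.Icc (0 : ℝ) 1, ∀ y ∈ Set.Icc (0 : ℝ) 1,
      |φ y - φ x| ≤ C * |y - x| ^ Real.logb 2 ((α + β) / max α β) := by
  obtain ⟨hcont, h0, h1, hL, hR⟩ := hφ
  have hab : (0:ℝ) < α + β := by linarith
  have hmax : (0:ℝ) < max α β := lt_max_iff.2 (Or.inl hα)
  set lam := Real.logb 2 ((α + β) / max α β) with hlamdef
  have hRpos : 0 < (α + β) / max α β := div_pos hab hmax
  have hR1 : 1 < (α + β) / max α β := by
    rw [lt_div_iff₀ hmax]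
    rcases max_cases α β with ⟨h, _⟩ | ⟨h, _⟩ <;> rw [h] <;> linarith
  have hlam_pos : 0 < lam := Real.logb_pos one_lt_two hR1
  have hlam_le : lam ≤ 1 := by
    rw [hlamdef, Real.logb_le_iff_le_rpow one_lt_two hRpos, Real.rpow_one,
      div_le_iff₀ hmax]
    rcases le_total α β with h | h
    · rw [max_eq_right h]; linarith
    · rw [max_eq_left h]; linarith
  refine ⟨hlam_pos, hlam_le, ?_⟩
  obtain ⟨B, hB⟩ := isCompact_Icc.exists_bound_of_continuousOn hcont
  have hM : ∀ u ∈ Set.Icc (0:ℝ) 1, ∀ v ∈ Set.Icc (0:ℝ) 1, |φ u - φ v| ≤ 2 * B := by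
    intro u hu v hv
    calc |φ u - φ v| ≤ |φ u| + |φ v| := by
          have := abs_add_le (φ u) (-(φ v)); simpa [sub_eq_add_neg] using this
      _ ≤ B + B := add_le_add (hB u hu) (hB v hv)
      _ = 2 * B := by ring
  set M : ℝ := 2 * B with hMdef
  have hM0 : 0 ≤ M :=
    le_trans (abs_nonneg _) (hM 0 ⟨le_refl 0, by norm_num⟩ 0 ⟨le_refl 0, by norm_num⟩)
  set r : ℝ := max α β / (α + β) with hrdef
  have hrpos : 0 < r := div_pos hmax hab
  have key := dyadic_bound α β hα hβ φ hL hR M hM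
  have key2 : ∀ n : ℕ, ∀ s ∈ Set.Icc (0:ℝ) 1, ∀ t ∈ Set.Icc (0:ℝ) 1, s ≤ t →
      t - s ≤ (1/2)^n → |φ t - φ s| ≤ 2 * (M * r ^ n) := by
    intro n s hs t ht hst hd
    have h2n : (0:ℝ) < 2 ^ n := by positivity
    rcases lt_or_eq_of_le hs.2 with hs1 | hs1
    · set k := ⌊s * 2 ^ n⌋₊ with hkdef
      have hk1 : (k:ℝ) ≤ s * 2 ^ n := Nat.floor_le (mul_nonneg hs.1 h2n.le)
      have hk2 : s * 2 ^ n < k + 1 := Nat.lt_floor_add_one _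
      have hkn : k < 2 ^ n := by
        have hklt : (k:ℝ) < 2 ^ n := lt_of_le_of_lt hk1 (by nlinarith)
        exact_mod_cast hklt
      have hsk : s ∈ Set.Icc ((k:ℝ) / 2 ^ n) (((k:ℝ) + 1) / 2 ^ n) :=
        ⟨(div_le_iff₀ h2n).2 hk1, (le_div_iff₀ h2n).2 hk2.le⟩
      rcases le_or_gt t (((k:ℝ) + 1) / 2 ^ n) with hcase | hcase
      · have hb := key n k hkn t ⟨hsk.1.trans hst, hcase⟩ s hsk
        have : 0 ≤ M * r ^ n := by positivity
        linarith
      · have hk1n : k + 1 < 2 ^ n := by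
          have hlt : ((k:ℝ) + 1) / 2 ^ n < 1 := lt_of_lt_of_le hcase ht.2
          rw [div_lt_one h2n] at hlt
          have : ((k + 1 : ℕ) : ℝ) < ((2 ^ n : ℕ) : ℝ) := by push_cast; linarith
          exact_mod_cast this
        have hmI : ((k:ℝ) + 1) / 2 ^ n ∈ Set.Icc ((k:ℝ) / 2 ^ n) (((k:ℝ) + 1) / 2 ^ n) :=
          ⟨by gcongr; linarith, le_refl _⟩
        have h1b := key n k hkn (((k:ℝ) + 1) / 2 ^ n) hmI s hsk
        have hhalf : (1/2:ℝ) ^ n * 2 ^ n = 1 := by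
          rw [← mul_pow]; norm_num
        have htI2 : t ∈ Set.Icc (((k+1:ℕ):ℝ) / 2 ^ n) ((((k+1:ℕ):ℝ) + 1) / 2 ^ n) := by
          push_cast
          refine ⟨hcase.le, ?_⟩
          rw [le_div_iff₀ h2n]
          have hs2 : s * 2 ^ n ≤ (k:ℝ) + 1 := hk2.le
          nlinarith [hsk.2]
        have hmI2 : ((k:ℝ) + 1) / 2 ^ n ∈
            Set.Icc (((k+1:ℕ):ℝ) / 2 ^ n) ((((k+1:ℕ):ℝ) + 1) / 2 ^ n) := by
          push_cast
          exact ⟨le_refl _, by gcongr <;> linarith⟩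
        have h2b := key n (k+1) hk1n t htI2 (((k:ℝ) + 1) / 2 ^ n) hmI2
        calc |φ t - φ s| ≤ |φ t - φ (((k:ℝ) + 1) / 2 ^ n)| + |φ (((k:ℝ) + 1) / 2 ^ n) - φ s| :=
              abs_sub_le _ _ _
          _ ≤ M * r ^ n + M * r ^ n := add_le_add h2b h1b
          _ = 2 * (M * r ^ n) := by ring
    · have hts : t = s := le_antisymm (by rw [hs1]; exact ht.2) hst
      rw [hts]
      simp only [sub_self, abs_zero]
      positivity
  refine ⟨4 * M, ?_⟩
  intro x hx y hy
  rcases eq_or_ne y x with rfl | hne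
  · simp [Real.zero_rpow hlam_pos.ne']
  · set d := |y - x| with hddef
    have hd0 : 0 < d := abs_pos.2 (sub_ne_zero.2 hne)
    have hd1 : d ≤ 1 := by
      rw [hddef, abs_sub_le_iff]
      constructor <;> linarith [hx.1, hx.2, hy.1, hy.2]
    set n := ⌊Real.logb 2 d⁻¹⌋₊ with hndef
    have hinv1 : 1 ≤ d⁻¹ := by
      rw [le_inv_comm₀ one_pos hd0]; simpa using hd1
    have hLn : (n:ℝ) ≤ Real.logb 2 d⁻¹ :=
      Nat.floor_le (Real.logb_nonneg one_lt_two hinv1)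
    have hLn2 : Real.logb 2 d⁻¹ < n + 1 := Nat.lt_floor_add_one _
    have hdinv : 0 < d⁻¹ := by positivity
    have hdn : d ≤ (1/2:ℝ) ^ n := by
      have h2le : ((2:ℝ)) ^ (n:ℝ) ≤ d⁻¹ :=
        (Real.le_logb_iff_rpow_le one_lt_two hdinv).1 hLn
      rw [Real.rpow_natCast] at h2le
      rw [div_pow, one_pow, le_div_iff₀ (by positivity : (0:ℝ) < 2 ^ n)]
      calc d * 2 ^ n ≤ d * d⁻¹ := mul_le_mul_of_nonneg_left h2le hd0.le
        _ = 1 := mul_inv_cancel₀ hd0.ne'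
    have hdn2 : ((1:ℝ)/2) ^ (n+1) < d := by
      have h2lt : d⁻¹ < (2:ℝ) ^ ((n:ℝ) + 1) :=
        (Real.logb_lt_iff_lt_rpow one_lt_two hdinv).1 hLn2
      rw [show ((n:ℝ) + 1) = ((n + 1 : ℕ) : ℝ) by push_cast; ring,
        Real.rpow_natCast] at h2lt
      rw [div_pow, one_pow, div_lt_iff₀ (by positivity : (0:ℝ) < 2 ^ (n+1))]
      calc 1 = d * d⁻¹ := (mul_inv_cancel₀ hd0.ne').symm
        _ < d * 2 ^ (n+1) := mul_lt_mul_of_pos_left h2lt hd0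
    have main : |φ y - φ x| ≤ 2 * (M * r ^ n) := by
      rcases le_total x y with hxy | hxy
      · have hdeq : y - x ≤ (1/2:ℝ) ^ n := by
          rw [hddef, abs_of_nonneg (sub_nonneg.2 hxy)] at hdn; exact hdn
        exact key2 n x hx y hy hxy hdeq
      · have hdeq : x - y ≤ (1/2:ℝ) ^ n := by
          rw [hddef, abs_of_nonpos (sub_nonpos.2 hxy)] at hdn; linarith [hdn]
        rw [abs_sub_comm]
        exact key2 n y hy x hx hxy hdeq
    have hr2 : r = (2:ℝ) ^ (-lam) := by
      have hRb : (α + β) / max α β = (2:ℝ) ^ lam :=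
        (Real.rpow_logb two_pos (by norm_num) hRpos).symm
      rw [hrdef, show max α β / (α + β) = ((α + β) / max α β)⁻¹ by rw [inv_div],
        hRb, ← Real.rpow_neg (by norm_num)]
    have hrn : r ^ n ≤ 2 * d ^ lam := by
      have e1 : ((1/2:ℝ)) ^ n = (2:ℝ) ^ (-(n:ℝ)) := by
        rw [Real.rpow_neg (by norm_num), Real.rpow_natCast, div_pow, one_pow, one_div]
      have e2 : r ^ n = ((1/2:ℝ) ^ n) ^ lam := by
        rw [hr2, e1, ← Real.rpow_natCast ((2:ℝ) ^ (-lam)) n,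
          ← Real.rpow_mul (by norm_num : (0:ℝ) ≤ 2),
          ← Real.rpow_mul (by norm_num : (0:ℝ) ≤ 2)]
        congr 1; ring
      have hle2d : ((1/2:ℝ)) ^ n ≤ 2 * d := by
        have : ((1:ℝ)/2) ^ n = 2 * ((1:ℝ)/2) ^ (n+1) := by ring
        rw [this]; linarith
      calc r ^ n = ((1/2:ℝ) ^ n) ^ lam := e2
        _ ≤ (2 * d) ^ lam := Real.rpow_le_rpow (by positivity) hle2d hlam_pos.le
        _ = (2:ℝ) ^ lam * d ^ lam := Real.mul_rpow (by norm_num) hd0.le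
        _ ≤ 2 * d ^ lam := by
            have h2l : (2:ℝ) ^ lam ≤ (2:ℝ) ^ (1:ℝ) :=
              Real.rpow_le_rpow_of_exponent_le one_le_two hlam_le
            rw [Real.rpow_one] at h2l
            have : (0:ℝ) ≤ d ^ lam := Real.rpow_nonneg hd0.le _
            nlinarith
    calc |φ y - φ x| ≤ 2 * (M * r ^ n) := main
      _ ≤ 2 * (M * (2 * d ^ lam)) := by
          apply mul_le_mul_of_nonneg_left (mul_le_mul_of_nonneg_left hrn hM0) (by norm_num)
      _ = 4 * M * d ^ lam := by ring
end

section
/- Let α, β > 0 with α ≠ β, λ := log₂((α+β)/max(α,β)), and φ the interpolation function for (α,β). Then for every γ > λ, φ is not Hölder continuous with exponent γ on [0,1]; in particular, φ is not Lipschitz continuous. Specifically, for every j ≥ 1, max(φ(2^{−j}) − φ(0), φ(1) − φ(1 − 2^{−j})) = (2^{−j})^λ. -/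
/-- Commuting a natural power with a real power for base `1/2`. -/
lemma half_pow_rpow (t : ℝ) (j : ℕ) :
    (((1 : ℝ) / 2) ^ j) ^ t = (((1 : ℝ) / 2) ^ t) ^ j := by
  have hhalf : (0 : ℝ) ≤ 1 / 2 := by norm_num
  rw [← Real.rpow_natCast ((1 / 2 : ℝ)) j, ← Real.rpow_mul hhalf, mul_comm,
    Real.rpow_mul hhalf, Real.rpow_natCast]

/-- If `α ≠ β`, then `φ` is not Hölder continuous on `[0,1]` for any exponent
`γ > λ := log₂((α+β)/max(α,β))`; in particular `φ` is not Lipschitz.  Moreover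
`max(φ(2^{−j}) − φ(0), φ(1) − φ(1 − 2^{−j})) = (2^{−j})^λ` for every `j ≥ 1`. -/
theorem phi_not_holder (α β : ℝ) (hα : 0 < α) (hβ : 0 < β) (hne : α ≠ β)
    (φ : ℝ → ℝ) (hφ : IsInterp α β φ) :
    (∀ γ : ℝ, Real.logb 2 ((α + β) / max α β) < γ →
      ¬ ∃ C : ℝ, ∀ x ∈ Set.Icc (0 : ℝ) 1, ∀ y ∈ Set.Icc (0 : ℝ) 1,
        |φ y - φ x| ≤ C * |y - x| ^ γ) ∧
    (¬ ∃ C : ℝ, ∀ x ∈ Set.Icc (0 : ℝ) 1, ∀ y ∈ Set.Icc (0 : ℝ) 1,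
        |φ y - φ x| ≤ C * |y - x|) ∧
    (∀ j : ℕ, 1 ≤ j →
      max (φ ((1 / 2) ^ j) - φ 0) (φ 1 - φ (1 - (1 / 2) ^ j))
        = (((1 : ℝ) / 2) ^ j) ^ Real.logb 2 ((α + β) / max α β)) := by
  obtain ⟨hcont, h0, h1, hL, hR⟩ := hφ
  have hs : (0 : ℝ) < α + β := by linarith
  have hm : (0 : ℝ) < max α β := lt_max_of_lt_left hα
  have hms : max α β < α + β := by
    rcases max_cases α β with ⟨h, _⟩ | ⟨h, _⟩ <;> rw [h] <;> linarith
  set lam := Real.logb 2 ((α + β) / max α β) with hlam_def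
  have hhalf : (0 : ℝ) ≤ 1 / 2 := by norm_num
  have hhalfle : ∀ j : ℕ, ((1 / 2 : ℝ)) ^ (j + 1) ≤ 1 / 2 := by
    intro j
    calc ((1 / 2 : ℝ)) ^ (j + 1) ≤ (1 / 2) ^ 1 :=
          pow_le_pow_of_le_one (by norm_num) (by norm_num) (by omega)
      _ = 1 / 2 := pow_one _
  -- values at dyadic points
  have hA : ∀ j : ℕ, φ ((1 / 2) ^ j) = (β / (α + β)) ^ j := by
    intro j
    induction j with
    | zero => simpa using h1
    | succ j ih =>
      have hmem : ((1 / 2 : ℝ)) ^ (j + 1) ∈ Set.Icc (0 : ℝ) (1 / 2) :=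
        ⟨by positivity, hhalfle j⟩
      rw [hL _ hmem, show 2 * ((1 / 2 : ℝ)) ^ (j + 1) = (1 / 2) ^ j by ring, ih]
      ring
  have hB : ∀ j : ℕ, φ (1 - (1 / 2) ^ j) = 1 - (α / (α + β)) ^ j := by
    intro j
    induction j with
    | zero => simpa using h0
    | succ j ih =>
      have hp : (0 : ℝ) < (1 / 2 : ℝ) ^ (j + 1) := by positivity
      have hmem : 1 - ((1 / 2 : ℝ)) ^ (j + 1) ∈ Set.Icc (1 / 2 : ℝ) 1 := by
        constructor
        · have := hhalfle j; linarith
        · linarith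
      rw [hR _ hmem,
        show 2 * (1 - ((1 / 2 : ℝ)) ^ (j + 1)) - 1 = 1 - (1 / 2) ^ j by ring, ih]
      have hq : α / (α + β) + β / (α + β) = 1 := by rw [← add_div, div_self hs.ne']
      linear_combination hq
  -- the real value of (1/2)^λ
  have hpow : ((1 / 2 : ℝ)) ^ lam = max α β / (α + β) := by
    have h2 : (2 : ℝ) ^ lam = (α + β) / max α β :=
      Real.rpow_logb (by norm_num) (by norm_num) (by positivity)
    rw [show (1 / 2 : ℝ) = (2 : ℝ)⁻¹ by norm_num,
      Real.inv_rpow (by norm_num : (0 : ℝ) ≤ 2), h2, inv_div]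
  -- key equality for all j
  have key : ∀ j : ℕ,
      max (φ ((1 / 2) ^ j) - φ 0) (φ 1 - φ (1 - (1 / 2) ^ j))
        = (((1 : ℝ) / 2) ^ j) ^ lam := by
    intro j
    rw [hA j, hB j, h0, h1, half_pow_rpow, hpow]
    have e1 : (β / (α + β)) ^ j - 0 = (β / (α + β)) ^ j := by ring
    have e2 : 1 - (1 - (α / (α + β)) ^ j) = (α / (α + β)) ^ j := by ring
    rw [e1, e2]
    rcases le_total α β with h | h
    · rw [max_eq_right h, max_eq_left (pow_le_pow_left₀ (by positivity) (by gcongr) j)]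
    · rw [max_eq_left h, max_eq_right (pow_le_pow_left₀ (by positivity) (by gcongr) j)]
  -- Hölder part
  have holder : ∀ γ : ℝ, lam < γ →
      ¬ ∃ C : ℝ, ∀ x ∈ Set.Icc (0 : ℝ) 1, ∀ y ∈ Set.Icc (0 : ℝ) 1,
        |φ y - φ x| ≤ C * |y - x| ^ γ := by
    intro γ hγ ⟨C, hC⟩
    have hb : (1 : ℝ) < (2 : ℝ) ^ (γ - lam) :=
      (Real.one_lt_rpow_iff_of_pos (by norm_num)).2 (Or.inl ⟨one_lt_two, by linarith⟩)
    have hj : ∀ j : ℕ, ((2 : ℝ) ^ (γ - lam)) ^ j ≤ C := by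
      intro j
      have hxp : (0 : ℝ) < (1 / 2 : ℝ) ^ j := by positivity
      have hx1 : ((1 / 2 : ℝ)) ^ j ≤ 1 := pow_le_one₀ hhalf (by norm_num)
      have hx : ((1 / 2 : ℝ)) ^ j ∈ Set.Icc (0 : ℝ) 1 := ⟨hxp.le, hx1⟩
      have hx' : 1 - ((1 / 2 : ℝ)) ^ j ∈ Set.Icc (0 : ℝ) 1 := ⟨by linarith, by linarith⟩
      have h01 : (0 : ℝ) ∈ Set.Icc (0 : ℝ) 1 := by norm_num
      have h11 : (1 : ℝ) ∈ Set.Icc (0 : ℝ) 1 := by norm_num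
      have b1 := hC 0 h01 _ hx
      have b2 := hC _ hx' 1 h11
      have habs1 : |((1 / 2 : ℝ)) ^ j - 0| = (1 / 2 : ℝ) ^ j := by
        rw [sub_zero, abs_of_nonneg hxp.le]
      have habs2 : |(1 : ℝ) - (1 - (1 / 2 : ℝ) ^ j)| = (1 / 2 : ℝ) ^ j := by
        rw [show (1 : ℝ) - (1 - (1 / 2 : ℝ) ^ j) = (1 / 2 : ℝ) ^ j by ring,
          abs_of_nonneg hxp.le]
      rw [habs1] at b1
      rw [habs2] at b2
      have hmax : (((1 : ℝ) / 2) ^ j) ^ lam ≤ C * ((1 / 2 : ℝ) ^ j) ^ γ := by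
        rw [← key j]
        exact max_le ((le_abs_self _).trans b1) ((le_abs_self _).trans b2)
      rw [half_pow_rpow lam, half_pow_rpow γ] at hmax
      have hgp : (0 : ℝ) < ((1 / 2 : ℝ) ^ γ) ^ j := by positivity
      have hdiv : ((1 / 2 : ℝ) ^ lam) ^ j / ((1 / 2 : ℝ) ^ γ) ^ j ≤ C :=
        (div_le_iff₀ hgp).2 hmax
      have heq : ((2 : ℝ) ^ (γ - lam)) ^ j
          = ((1 / 2 : ℝ) ^ lam) ^ j / ((1 / 2 : ℝ) ^ γ) ^ j := by
        rw [← div_pow]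
        congr 1
        rw [← Real.rpow_sub (by norm_num : (0 : ℝ) < 1 / 2),
          show (1 / 2 : ℝ) = (2 : ℝ)⁻¹ by norm_num,
          Real.inv_rpow (by norm_num : (0 : ℝ) ≤ 2), ← Real.rpow_neg (by norm_num)]
        ring_nf
      rw [heq]
      exact hdiv
    obtain ⟨n, hn⟩ := pow_unbounded_of_one_lt C hb
    exact absurd (hj n) (not_le.2 hn)
  have hlam1 : lam < 1 := by
    rw [hlam_def]
    have hlt : (α + β) / max α β < 2 := by
      rw [div_lt_iff₀ hm]
      rcases max_cases α β with ⟨h, h'⟩ | ⟨h, h'⟩ <;> rw [h]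
      · rcases lt_or_eq_of_le h' with h'' | h''
        · linarith
        · exact absurd h''.symm hne
      · linarith
    calc Real.logb 2 ((α + β) / max α β) < Real.logb 2 2 :=
          Real.logb_lt_logb (by norm_num) (by positivity) hlt
      _ = 1 := Real.logb_self_eq_one one_lt_two
  refine ⟨holder, ?_, fun j _ => key j⟩
  rintro ⟨C, hC⟩
  exact holder 1 hlam1 ⟨C, fun x hx y hy => by
    simpa [Real.rpow_one] using hC x hx y hy⟩
end

section
/- Suppose f : {1,2,3,…} → ℝ satisfies f(2n) = (α+β)f(n) + g(2n) and f(2n+1) = αf(n) + βf(n+1) + g(2n+1) for n ≥ 1, with α, β > 0, g(1) := 0. Extend f and g to real x ≥ 1 by f(n+t) := (1−φ(t))f(n) + φ(t)f(n+1) (similarly for g), where φ is the interpolation function for (α,β). Then f(x) = (α+β)·f(x/2) + g(x) for all real x ≥ 2. -/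
/-- If the sequences `f, g` satisfy `f(2n) = (α+β)f(n) + g(2n)` and
`f(2n+1) = αf(n) + βf(n+1) + g(2n+1)` with `g(1) = 0`, and `F, G` are the
continuous extensions via the interpolation function `φ`, then
`F(x) = (α+β)·F(x/2) + G(x)` for all real `x ≥ 2`. -/
theorem extension_functional_equation (α β : ℝ) (hα : 0 < α) (hβ : 0 < β)
    (φ : ℝ → ℝ) (hφ : IsInterp α β φ)
    (f g : ℕ → ℝ) (hg1 : g 1 = 0)
    (hrec : ∀ n : ℕ, 1 ≤ n →
      f (2 * n) = (α + β) * f n + g (2 * n) ∧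
      f (2 * n + 1) = α * f n + β * f (n + 1) + g (2 * n + 1))
    (F G : ℝ → ℝ)
    (hF : ∀ n : ℕ, 1 ≤ n → ∀ t ∈ Set.Icc (0 : ℝ) 1,
      F ((n : ℝ) + t) = (1 - φ t) * f n + φ t * f (n + 1))
    (hG : ∀ n : ℕ, 1 ≤ n → ∀ t ∈ Set.Icc (0 : ℝ) 1,
      G ((n : ℝ) + t) = (1 - φ t) * g n + φ t * g (n + 1)) :
    ∀ x : ℝ, 2 ≤ x → F x = (α + β) * F (x / 2) + G x := by
  obtain ⟨hcont, hφ0, hφ1, hlo, hhi⟩ := hφ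
  have hab : α + β ≠ 0 := by positivity
  intro x hx
  set y := x / 2 with hy
  have hy1 : (1 : ℝ) ≤ y := by
    rw [hy]; linarith
  set n : ℕ := ⌊y⌋₊ with hn
  have hn1 : 1 ≤ n := Nat.le_floor (by exact_mod_cast hy1)
  set s : ℝ := y - n with hs
  have hs0 : 0 ≤ s := by
    have := Nat.floor_le (le_trans zero_le_one hy1)
    simp [hs]; linarith
  have hs1 : s < 1 := by
    have := Nat.lt_floor_add_one y
    simp [hs]; linarith
  have hyns : y = (n : ℝ) + s := by rw [hs]; ring
  have hFy : F y = (1 - φ s) * f n + φ s * f (n + 1) := by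
    rw [hyns]; exact hF n hn1 s ⟨hs0, hs1.le⟩
  have hrn := hrec n hn1
  have hrn1 := hrec (n + 1) (by omega)
  by_cases hc : s ≤ 1 / 2
  · -- x = 2n + 2s with 2s ∈ [0,1]
    have hphi : φ s = β / (α + β) * φ (2 * s) := hlo s ⟨hs0, hc⟩
    have hx2 : x = ((2 * n : ℕ) : ℝ) + 2 * s := by
      push_cast; rw [hy] at hyns; linarith
    have hFx : F x = (1 - φ (2 * s)) * f (2 * n) + φ (2 * s) * f (2 * n + 1) := by
      rw [hx2]; exact hF (2 * n) (by omega) (2 * s) ⟨by linarith, by linarith⟩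
    have hGx : G x = (1 - φ (2 * s)) * g (2 * n) + φ (2 * s) * g (2 * n + 1) := by
      rw [hx2]; exact hG (2 * n) (by omega) (2 * s) ⟨by linarith, by linarith⟩
    rw [hFx, hGx, hFy, hphi, hrn.1, hrn.2]
    field_simp
    ring
  · -- x = (2n+1) + (2s-1) with 2s-1 ∈ [0,1]
    push_neg at hc
    have hphi : φ s = α / (α + β) * φ (2 * s - 1) + β / (α + β) := hhi s ⟨hc.le, hs1.le⟩
    have hx2 : x = ((2 * n + 1 : ℕ) : ℝ) + (2 * s - 1) := by
      push_cast; rw [hy] at hyns; linarith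
    have hFx : F x = (1 - φ (2 * s - 1)) * f (2 * n + 1) + φ (2 * s - 1) * f (2 * n + 1 + 1) := by
      rw [hx2]; exact hF (2 * n + 1) (by omega) (2 * s - 1) ⟨by linarith, by linarith⟩
    have hGx : G x = (1 - φ (2 * s - 1)) * g (2 * n + 1) + φ (2 * s - 1) * g (2 * n + 1 + 1) := by
      rw [hx2]; exact hG (2 * n + 1) (by omega) (2 * s - 1) ⟨by linarith, by linarith⟩
    have h2n2 : 2 * n + 1 + 1 = 2 * (n + 1) := by ring
    rw [hFx, hGx, hFy, hphi, hrn.2, h2n2, hrn1.1]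
    field_simp
    ring
end

section
/- Let α, β > 0, ρ := log₂(α+β), and let f be the continuous extension (via the interpolation function φ) of a sequence satisfying f(2n) = (α+β)f(n) + g(2n), f(2n+1) = αf(n) + βf(n+1) + g(2n+1), with g extended likewise and g(x) := 0 for x < 1. Then for all x ≥ 1, x^{−ρ} f(x) = Σ_{k≥0} (2^{−k}x)^{−ρ} g(2^{−k}x) + f(1)·P₀(log₂ x), where P₀(t) := (1 + (α+β−1)·φ(2^{{t}} − 1))·(α+β)^{−{t}} is a continuous 1-periodic function with P₀(0) = 1. -/
/-- With `ρ := log₂(α+β)`, the continuous extension `F` of the recurrence satisfies,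
for all `x ≥ 1`,
`x^{−ρ} F(x) = Σ_{k≥0} (2^{−k}x)^{−ρ} G(2^{−k}x) + f(1)·P₀(log₂ x)`, where
`P₀(t) = (1 + (α+β−1)φ(2^{{t}}−1))(α+β)^{−{t}}` is continuous, 1-periodic, `P₀(0)=1`. -/
theorem key_identity (α β : ℝ) (hα : 0 < α) (hβ : 0 < β)
    (φ : ℝ → ℝ) (hφ : IsInterp α β φ)
    (f g : ℕ → ℝ) (hg1 : g 1 = 0)
    (hrec : ∀ n : ℕ, 1 ≤ n →
      f (2 * n) = (α + β) * f n + g (2 * n) ∧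
      f (2 * n + 1) = α * f n + β * f (n + 1) + g (2 * n + 1))
    (F G : ℝ → ℝ)
    (hF : ∀ n : ℕ, 1 ≤ n → ∀ t ∈ Set.Icc (0 : ℝ) 1,
      F ((n : ℝ) + t) = (1 - φ t) * f n + φ t * f (n + 1))
    (hG : ∀ n : ℕ, 1 ≤ n → ∀ t ∈ Set.Icc (0 : ℝ) 1,
      G ((n : ℝ) + t) = (1 - φ t) * g n + φ t * g (n + 1))
    (hG0 : ∀ x : ℝ, x < 1 → G x = 0)
    (P₀ : ℝ → ℝ)
    (hP₀ : ∀ t : ℝ, P₀ t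
      = (1 + (α + β - 1) * φ ((2 : ℝ) ^ Int.fract t - 1))
          * (α + β) ^ (-(Int.fract t))) :
    Continuous P₀ ∧ (∀ t : ℝ, P₀ (t + 1) = P₀ t) ∧ P₀ 0 = 1 ∧
    ∀ x : ℝ, 1 ≤ x →
      x ^ (-(Real.logb 2 (α + β))) * F x
        = (∑' k : ℕ, ((2 : ℝ) ^ (-(k : ℝ)) * x) ^ (-(Real.logb 2 (α + β)))
              * G ((2 : ℝ) ^ (-(k : ℝ)) * x))
          + f 1 * P₀ (Real.logb 2 x) := by
  obtain ⟨hφc, hφ0, hφ1, hφl, hφr⟩ := hφ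
  have hαβ : (0:ℝ) < α + β := by linarith
  have hαβ' : α + β ≠ 0 := ne_of_gt hαβ
  set ρ := Real.logb 2 (α + β) with hρ
  have h2ρ : (2:ℝ) ^ ρ = α + β := Real.rpow_logb (by norm_num) (by norm_num) hαβ
  -- the function whose composition with `fract` is `P₀`
  set Q : ℝ → ℝ := fun s => (1 + (α + β - 1) * φ ((2:ℝ) ^ s - 1)) * (α + β) ^ (-s)
    with hQdef
  have hPQ : P₀ = Q ∘ Int.fract := funext fun t => hP₀ t
  have hQ0 : Q 0 = 1 := by simp [hQdef, hφ0, Real.rpow_zero]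
  have hQ1 : Q 1 = 1 := by
    simp only [hQdef, Real.rpow_one]
    rw [show ((2:ℝ) - 1) = 1 by norm_num, hφ1, Real.rpow_neg_one]
    field_simp
    ring
  have hQc : ContinuousOn Q (Set.Icc 0 1) := by
    have h2 : Continuous fun s : ℝ => (2:ℝ) ^ s :=
      continuous_iff_continuousAt.2 fun _ => Real.continuousAt_const_rpow two_ne_zero
    have hab : Continuous fun s : ℝ => (α + β) ^ (-s) := by
      have h := continuous_iff_continuousAt.2
        fun b : ℝ => Real.continuousAt_const_rpow (b := b) hαβ'
      exact h.comp continuous_neg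
    have hmap : Set.MapsTo (fun s : ℝ => (2:ℝ) ^ s - 1) (Set.Icc 0 1) (Set.Icc 0 1) := by
      intro s hs
      obtain ⟨h0, h1⟩ := hs
      constructor
      · have : (2:ℝ) ^ (0:ℝ) ≤ 2 ^ s :=
          Real.rpow_le_rpow_of_exponent_le (by norm_num) h0
        rw [Real.rpow_zero] at this
        simpa using this
      · have : (2:ℝ) ^ s ≤ 2 ^ (1:ℝ) :=
          Real.rpow_le_rpow_of_exponent_le (by norm_num) h1
        rw [Real.rpow_one] at this
        simp only [Set.mem_Icc]
        linarith
    have h1 : ContinuousOn (fun s : ℝ => φ ((2:ℝ) ^ s - 1)) (Set.Icc 0 1) :=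
      hφc.comp ((h2.sub continuous_const).continuousOn) hmap
    exact (continuousOn_const.add (continuousOn_const.mul h1)).mul hab.continuousOn
  have hPcont : Continuous P₀ := by
    rw [hPQ]
    exact ContinuousOn.comp_fract'' hQc (hQ0.trans hQ1.symm)
  have hPper : ∀ t : ℝ, P₀ (t + 1) = P₀ t := by
    intro t
    rw [hPQ]
    simp [Int.fract_add_one]
  have hP0 : P₀ 0 = 1 := by
    rw [hPQ]
    simpa using hQ0
  refine ⟨hPcont, hPper, hP0, ?_⟩
  -- the functional equation `F(2x) = (α+β)F(x) + G(2x)` for `x ≥ 1`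
  have step : ∀ x : ℝ, 1 ≤ x → F (2 * x) = (α + β) * F x + G (2 * x) := by
    intro x hx
    have hx0 : (0:ℝ) ≤ x := by linarith
    set n := ⌊x⌋₊ with hn
    have hn1 : 1 ≤ n := Nat.le_floor (by exact_mod_cast hx)
    have hnx : (n:ℝ) ≤ x := Nat.floor_le hx0
    have hxn : x < n + 1 := Nat.lt_floor_add_one x
    set t := x - n with ht
    have ht0 : 0 ≤ t := by simp only [ht, sub_nonneg]; exact hnx
    have ht1 : t < 1 := by simp only [ht]; linarith
    have hxt : x = (n:ℝ) + t := by simp [ht]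
    have hFx : F x = (1 - φ t) * f n + φ t * f (n+1) := by
      rw [hxt]; exact hF n hn1 t ⟨ht0, ht1.le⟩
    rcases le_or_gt t (1/2) with hc | hc
    · have harg : 2 * x = ((2*n : ℕ):ℝ) + 2*t := by push_cast; rw [hxt]; ring
      have hF2 : F (2*x) = (1 - φ (2*t)) * f (2*n) + φ (2*t) * f (2*n+1) := by
        rw [harg]; exact hF (2*n) (by omega) (2*t) ⟨by linarith, by linarith⟩
      have hG2 : G (2*x) = (1 - φ (2*t)) * g (2*n) + φ (2*t) * g (2*n+1) := by
        rw [harg]; exact hG (2*n) (by omega) (2*t) ⟨by linarith, by linarith⟩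
      obtain ⟨hr1, hr2⟩ := hrec n hn1
      have hφt : φ t = β / (α+β) * φ (2*t) := hφl t ⟨ht0, hc⟩
      rw [hF2, hG2, hFx, hr1, hr2, hφt]
      field_simp
      ring
    · have harg : 2 * x = ((2*n+1 : ℕ):ℝ) + (2*t-1) := by push_cast; rw [hxt]; ring
      have hidx : 2*n+1+1 = 2*(n+1) := by ring
      have hF2 : F (2*x) = (1 - φ (2*t-1)) * f (2*n+1) + φ (2*t-1) * f (2*(n+1)) := by
        rw [harg, ← hidx]
        exact hF (2*n+1) (by omega) (2*t-1) ⟨by linarith, by linarith⟩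
      have hG2 : G (2*x) = (1 - φ (2*t-1)) * g (2*n+1) + φ (2*t-1) * g (2*(n+1)) := by
        rw [harg, ← hidx]
        exact hG (2*n+1) (by omega) (2*t-1) ⟨by linarith, by linarith⟩
      obtain ⟨-, hr2⟩ := hrec n hn1
      obtain ⟨hr1', -⟩ := hrec (n+1) (by omega)
      have hφt : φ t = α / (α+β) * φ (2*t-1) + β / (α+β) := hφr t ⟨hc.le, ht1.le⟩
      rw [hF2, hG2, hFx, hr2, hr1', hφt]
      field_simp
      ring
  -- the value on the fundamental domain `[1,2)`
  have base : ∀ x : ℝ, 1 ≤ x → x < 2 →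
      F x - G x = f 1 * (1 + (α+β-1) * φ (x-1)) := by
    intro x hx hx2
    have harg : x = ((1:ℕ):ℝ) + (x-1) := by push_cast; ring
    have hFx : F x = (1 - φ (x-1)) * f 1 + φ (x-1) * f 2 := by
      have h := hF 1 le_rfl (x-1) ⟨by linarith, by linarith⟩
      simp only [Nat.cast_one] at h
      rw [show (1:ℝ) + (x-1) = x by ring] at h
      norm_num at h
      exact h
    have hGx : G x = (1 - φ (x-1)) * g 1 + φ (x-1) * g 2 := by
      have h := hG 1 le_rfl (x-1) ⟨by linarith, by linarith⟩
      simp only [Nat.cast_one] at h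
      rw [show (1:ℝ) + (x-1) = x by ring] at h
      norm_num at h
      exact h
    have h2 : f 2 = (α+β) * f 1 + g 2 := by
      have h := (hrec 1 le_rfl).1
      norm_num at h
      exact h
    rw [hFx, hGx, hg1, h2]
    ring
  -- halving a power
  have hhalf : ∀ y : ℝ, 0 < y → (2*y) ^ (-ρ) = (α+β)⁻¹ * y ^ (-ρ) := by
    intro y hy
    rw [Real.mul_rpow (by norm_num) hy.le, Real.rpow_neg (by norm_num), h2ρ]
  -- the key identity with a finite sum, by induction on the dyadic scale
  have main : ∀ m : ℕ, ∀ x : ℝ, (2:ℝ)^m ≤ x → x < (2:ℝ)^(m+1) →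
      x ^ (-ρ) * F x
        = (∑ k ∈ Finset.range (m+1),
            ((2 : ℝ) ^ (-(k : ℝ)) * x) ^ (-ρ) * G ((2 : ℝ) ^ (-(k : ℝ)) * x))
          + f 1 * P₀ (Real.logb 2 x) := by
    intro m
    induction m with
    | zero =>
      intro x hx1 hx2
      rw [pow_zero] at hx1
      rw [pow_one] at hx2
      have hx0 : (0:ℝ) < x := by linarith
      have hL0 : 0 ≤ Real.logb 2 x := Real.logb_nonneg (by norm_num) hx1
      have hL1 : Real.logb 2 x < 1 := by
        have h := Real.logb_lt_logb (by norm_num : (1:ℝ) < 2) hx0 hx2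
        simpa using h
      have hfr : Int.fract (Real.logb 2 x) = Real.logb 2 x :=
        Int.fract_eq_self.mpr ⟨hL0, hL1⟩
      have h2L : (2:ℝ) ^ Real.logb 2 x = x :=
        Real.rpow_logb (by norm_num) (by norm_num) hx0
      have hpow : (α+β) ^ (-(Real.logb 2 x)) = x ^ (-ρ) := by
        rw [← h2ρ, ← Real.rpow_mul (by norm_num : (0:ℝ) ≤ 2)]
        conv_rhs => rw [← h2L, ← Real.rpow_mul (by norm_num : (0:ℝ) ≤ 2)]
        ring_nf
      rw [Finset.sum_range_one]
      simp only [Nat.cast_zero, neg_zero, Real.rpow_zero, one_mul]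
      have hb := base x hx1 hx2
      rw [hP₀, hfr, h2L, hpow]
      have hFG : F x = G x + f 1 * (1 + (α+β-1) * φ (x-1)) := by linarith
      rw [hFG]
      ring
    | succ m ih =>
      intro x hx1 hx2
      have hx0 : (0:ℝ) < x := lt_of_lt_of_le (by positivity) hx1
      set y := x / 2 with hy
      have hy0 : (0:ℝ) < y := by positivity
      have hxy : x = 2 * y := by rw [hy]; ring
      have hy1 : (2:ℝ)^m ≤ y := by
        rw [hy]
        rw [pow_succ] at hx1
        linarith
      have hy2 : y < (2:ℝ)^(m+1) := by
        rw [hy]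
        rw [pow_succ] at hx2
        linarith
      have h1y : (1:ℝ) ≤ y := le_trans (one_le_pow₀ (by norm_num)) hy1
      have hstep := step y h1y
      rw [← hxy] at hstep
      have ihy := ih y hy1 hy2
      -- relate the logs
      have hlog : Real.logb 2 x = Real.logb 2 y + 1 := by
        rw [hxy, Real.logb_mul (by norm_num) hy0.ne']
        rw [Real.logb_self_eq_one (by norm_num : (1:ℝ) < 2)]
        ring
      -- relate the sum terms
      have hterm : ∀ k : ℕ, (2:ℝ) ^ (-((k+1 : ℕ):ℝ)) * x = (2:ℝ) ^ (-(k:ℝ)) * y := by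
        intro k
        push_cast
        rw [neg_add, Real.rpow_add (by norm_num), Real.rpow_neg_one, hxy]
        ring
      rw [Finset.sum_range_succ']
      simp only [Nat.cast_zero, neg_zero, Real.rpow_zero, one_mul]
      have hsum : (∑ k ∈ Finset.range (m+1),
            ((2 : ℝ) ^ (-((k+1 : ℕ) : ℝ)) * x) ^ (-ρ) * G ((2 : ℝ) ^ (-((k+1 : ℕ):ℝ)) * x))
          = ∑ k ∈ Finset.range (m+1),
            ((2 : ℝ) ^ (-(k : ℝ)) * y) ^ (-ρ) * G ((2 : ℝ) ^ (-(k : ℝ)) * y) := by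
        refine Finset.sum_congr rfl fun k _ => ?_
        rw [hterm k]
      push_cast at hsum ⊢
      rw [hsum]
      have hxρ : x ^ (-ρ) = (α+β)⁻¹ * y ^ (-ρ) := by
        rw [hxy]
        exact hhalf y hy0
      rw [hstep, hxρ, hlog, hPper (Real.logb 2 y)]
      have : (α + β)⁻¹ * y ^ (-ρ) * ((α + β) * F y + G x)
          = y ^ (-ρ) * F y + (α + β)⁻¹ * y ^ (-ρ) * G x := by
        field_simp
      rw [this, ihy]
      ring
  -- conclusion: pick the dyadic scale of `x` and identify the `tsum` with the finite sum
  intro x hx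
  have hx0 : (0:ℝ) < x := by linarith
  have hfl1 : 1 ≤ ⌊x⌋₊ := Nat.le_floor (by exact_mod_cast hx)
  set m := Nat.log 2 ⌊x⌋₊ with hm
  have h1 : (2:ℝ)^m ≤ x := by
    have h := Nat.pow_log_le_self 2 (by omega : ⌊x⌋₊ ≠ 0)
    have h2 : ((2^m : ℕ):ℝ) ≤ (⌊x⌋₊ : ℝ) := by exact_mod_cast h
    have h3 : ((⌊x⌋₊ : ℕ):ℝ) ≤ x := Nat.floor_le hx0.le
    push_cast at h2
    linarith
  have h2 : x < (2:ℝ)^(m+1) := by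
    have h := Nat.lt_pow_succ_log_self (by norm_num : 1 < 2) ⌊x⌋₊
    have h4 : ⌊x⌋₊ + 1 ≤ 2^(m+1) := h
    have h5 : ((⌊x⌋₊ : ℕ):ℝ) + 1 ≤ ((2^(m+1) : ℕ):ℝ) := by exact_mod_cast h4
    have h6 : x < (⌊x⌋₊ : ℝ) + 1 := Nat.lt_floor_add_one x
    push_cast at h5
    linarith
  have hvan : ∀ k : ℕ, k ∉ Finset.range (m+1) →
      ((2 : ℝ) ^ (-(k : ℝ)) * x) ^ (-ρ) * G ((2 : ℝ) ^ (-(k : ℝ)) * x) = 0 := by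
    intro k hk
    have hk' : m + 1 ≤ k := by simpa using hk
    have hxk : x < (2:ℝ)^k := lt_of_lt_of_le h2 (pow_le_pow_right₀ (by norm_num) hk')
    have hsmall : (2:ℝ) ^ (-(k:ℝ)) * x < 1 := by
      have hpos : (0:ℝ) < (2:ℝ) ^ (-(k:ℝ)) := Real.rpow_pos_of_pos (by norm_num) _
      have h7 : (2:ℝ) ^ (-(k:ℝ)) * x < (2:ℝ) ^ (-(k:ℝ)) * (2:ℝ)^k :=
        mul_lt_mul_of_pos_left hxk hpos
      have h8 : (2:ℝ) ^ (-(k:ℝ)) * (2:ℝ)^k = 1 := by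
        rw [← Real.rpow_natCast 2 k, ← Real.rpow_add (by norm_num)]
        norm_num
      linarith
    rw [hG0 _ hsmall, mul_zero]
  rw [tsum_eq_sum hvan]
  exact main m x h1 h2
end

section
/- Let α, β > 0 with α + β > 1, and let S_{α,β} be defined by S_{α,β}(1) = 1 and S_{α,β}(n) = α·S_{α,β}(⌊n/2⌋) + β·S_{α,β}(⌈n/2⌉) for n ≥ 2. Then S_{α,β}(n) = (1 + (α+β−1)·φ(2^{{log₂ n}} − 1))·(α+β)^{⌊log₂ n⌋} for all n ≥ 1, where φ is the interpolation function for (α,β) and {·}, ⌊·⌋ denote fractional and integer parts. -/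
/-- Midpoint identity on dyadic rationals. -/
lemma interp_mid (α β : ℝ) (hα : 0 < α) (hβ : 0 < β) (φ : ℝ → ℝ)
    (hφ : IsInterp α β φ) :
    ∀ j : ℕ, ∀ s : ℕ, s < 2 ^ j →
      (α + β) * φ ((2 * (s : ℝ) + 1) / 2 ^ (j + 1))
        = α * φ ((s : ℝ) / 2 ^ j) + β * φ (((s : ℝ) + 1) / 2 ^ j) := by
  obtain ⟨-, hφ0, hφ1, he1, he2⟩ := hφ
  have hc0 : (0 : ℝ) < α + β := by linarith
  intro j
  induction j with
  | zero =>
    intro s hs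
    interval_cases s
    have h12 : φ (1 / 2) = β / (α + β) := by
      have := he1 (1 / 2) ⟨by norm_num, le_refl _⟩
      rw [this]; norm_num [hφ1]
    norm_num [h12, hφ0, hφ1]
    field_simp
  | succ j ih =>
    intro s hs
    rcases lt_or_ge s (2 ^ j) with hl | hr
    · -- left half
      have hsR : (s : ℝ) + 1 ≤ 2 ^ j := by exact_mod_cast hl
      have hp : (0:ℝ) < (2:ℝ) ^ j := by positivity
      have ht : (2 * (s:ℝ) + 1) / 2 ^ (j + 2) ∈ Set.Icc (0:ℝ) (1/2) := by
        constructor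
        · positivity
        · rw [div_le_iff₀ (by positivity)]
          have : ((2:ℝ)) ^ (j+2) = 4 * 2 ^ j := by ring
          rw [this]; nlinarith
      have hu : (s:ℝ) / 2 ^ (j + 1) ∈ Set.Icc (0:ℝ) (1/2) := by
        constructor
        · positivity
        · rw [div_le_iff₀ (by positivity)]
          have : ((2:ℝ)) ^ (j+1) = 2 * 2 ^ j := by ring
          rw [this]; nlinarith
      have hv : ((s:ℝ) + 1) / 2 ^ (j + 1) ∈ Set.Icc (0:ℝ) (1/2) := by
        constructor
        · positivity
        · rw [div_le_iff₀ (by positivity)]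
          have : ((2:ℝ)) ^ (j+1) = 2 * 2 ^ j := by ring
          rw [this]; nlinarith
      have e1 := he1 _ ht
      have e2 := he1 _ hu
      have e3 := he1 _ hv
      rw [show (2:ℝ) * ((2 * (s:ℝ) + 1) / 2 ^ (j + 2)) = (2 * (s:ℝ) + 1) / 2 ^ (j+1) by
        field_simp; ring] at e1
      rw [show (2:ℝ) * ((s:ℝ) / 2 ^ (j + 1)) = (s:ℝ) / 2 ^ j by field_simp; ring] at e2
      rw [show (2:ℝ) * (((s:ℝ) + 1) / 2 ^ (j + 1)) = ((s:ℝ) + 1) / 2 ^ j by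
        field_simp; ring] at e3
      have hIH := ih s hl
      rw [show j + 1 + 1 = j + 2 from rfl, e1, e2, e3]
      field_simp
      linear_combination hIH
    · -- right half
      obtain ⟨s', rfl⟩ := Nat.exists_eq_add_of_le hr
      have hs' : s' < 2 ^ j := by
        have : (2:ℕ) ^ (j+1) = 2 ^ j + 2 ^ j := by ring
        omega
      have hsR : (s' : ℝ) + 1 ≤ 2 ^ j := by exact_mod_cast hs'
      have hcast : ((2 ^ j + s' : ℕ) : ℝ) = 2 ^ j + (s' : ℝ) := by push_cast; ring
      rw [hcast]
      have ht : (2 * ((2:ℝ) ^ j + (s':ℝ)) + 1) / 2 ^ (j + 2) ∈ Set.Icc (1/2 : ℝ) 1 := by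
        constructor
        · rw [le_div_iff₀ (by positivity)]
          have : ((2:ℝ)) ^ (j+2) = 4 * 2 ^ j := by ring
          rw [this]; nlinarith [Nat.cast_nonneg (α := ℝ) s']
        · rw [div_le_one (by positivity)]
          have : ((2:ℝ)) ^ (j+2) = 4 * 2 ^ j := by ring
          rw [this]; nlinarith
      have hu : ((2:ℝ) ^ j + (s':ℝ)) / 2 ^ (j + 1) ∈ Set.Icc (1/2 : ℝ) 1 := by
        constructor
        · rw [le_div_iff₀ (by positivity)]
          have : ((2:ℝ)) ^ (j+1) = 2 * 2 ^ j := by ring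
          rw [this]; nlinarith [Nat.cast_nonneg (α := ℝ) s']
        · rw [div_le_one (by positivity)]
          have : ((2:ℝ)) ^ (j+1) = 2 * 2 ^ j := by ring
          rw [this]; nlinarith
      have hv : ((2:ℝ) ^ j + (s':ℝ) + 1) / 2 ^ (j + 1) ∈ Set.Icc (1/2 : ℝ) 1 := by
        constructor
        · rw [le_div_iff₀ (by positivity)]
          have : ((2:ℝ)) ^ (j+1) = 2 * 2 ^ j := by ring
          rw [this]; nlinarith [Nat.cast_nonneg (α := ℝ) s']
        · rw [div_le_one (by positivity)]
          have : ((2:ℝ)) ^ (j+1) = 2 * 2 ^ j := by ring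
          rw [this]; nlinarith
      have e1 := he2 _ ht
      have e2 := he2 _ hu
      have e3 := he2 _ hv
      rw [show (2:ℝ) * ((2 * ((2:ℝ) ^ j + (s':ℝ)) + 1) / 2 ^ (j + 2)) - 1
            = (2 * (s':ℝ) + 1) / 2 ^ (j+1) by field_simp; ring] at e1
      rw [show (2:ℝ) * (((2:ℝ) ^ j + (s':ℝ)) / 2 ^ (j + 1)) - 1 = (s':ℝ) / 2 ^ j by
        field_simp; ring] at e2
      rw [show (2:ℝ) * (((2:ℝ) ^ j + (s':ℝ) + 1) / 2 ^ (j + 1)) - 1 = ((s':ℝ) + 1) / 2 ^ j by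
        field_simp; ring] at e3
      have hIH := ih s' hs'
      rw [show j + 1 + 1 = j + 2 from rfl]
      rw [show ((2:ℝ) ^ j + (s':ℝ) + 1) / 2 ^ (j + 1)
            = ((2:ℝ) ^ j + ((s':ℝ) + 1)) / 2 ^ (j + 1) by ring] at e3
      rw [show (2:ℝ) ^ j + (s':ℝ) + 1 = (2:ℝ) ^ j + ((s':ℝ) + 1) by ring]
      rw [e1, e2, e3]
      field_simp
      linear_combination α * hIH

/-- Explicit formula for `S_{α,β}(n)`: if `S(1)=1` and
`S(n) = α S(⌊n/2⌋) + β S(⌈n/2⌉)` for `n ≥ 2`, then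
`S(n) = (1 + (α+β−1)φ(2^{{log₂ n}} − 1))·(α+β)^{⌊log₂ n⌋}` for all `n ≥ 1`. -/
theorem S_explicit (α β : ℝ) (hα : 0 < α) (hβ : 0 < β) (hab : 1 < α + β)
    (φ : ℝ → ℝ) (hφ : IsInterp α β φ)
    (S : ℕ → ℝ) (hS1 : S 1 = 1)
    (hSrec : ∀ n : ℕ, 2 ≤ n → S n = α * S (n / 2) + β * S ((n + 1) / 2)) :
    ∀ n : ℕ, 1 ≤ n →
      S n = (1 + (α + β - 1) * φ ((2 : ℝ) ^ Int.fract (Real.logb 2 (n : ℝ)) - 1))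
              * (α + β) ^ (⌊Real.logb 2 (n : ℝ)⌋) := by
  have hc0 : (0 : ℝ) < α + β := by linarith
  have hmid := interp_mid α β hα hβ φ hφ
  obtain ⟨-, hφ0, hφ1, he1, he2⟩ := hφ
  -- key formula in terms of dyadic representation
  have key : ∀ k : ℕ, ∀ r : ℕ, r ≤ 2 ^ k →
      S (2 ^ k + r) = (1 + (α + β - 1) * φ ((r : ℝ) / 2 ^ k)) * (α + β) ^ k := by
    intro k
    induction k with
    | zero =>
      intro r hr
      interval_cases r
      · simpa [hφ0] using hS1
      · have h2 := hSrec 2 le_rfl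
        norm_num at h2
        norm_num [h2, hS1, hφ1]
    | succ k ih =>
      intro r hr
      have hp : (2:ℕ) ^ (k + 1) = 2 ^ k + 2 ^ k := by ring
      rcases Nat.even_or_odd r with ⟨s, hs⟩ | ⟨s, hs⟩
      · -- even case : r = s + s
        subst hs
        have hsle : s ≤ 2 ^ k := by omega
        have hrec := hSrec (2 ^ (k+1) + (s + s)) (by
          have : 1 ≤ 2 ^ k := Nat.one_le_two_pow
          omega)
        have h2 : (2 ^ (k+1) + (s + s)) / 2 = 2 ^ k + s := by omega
        have h3 : (2 ^ (k+1) + (s + s) + 1) / 2 = 2 ^ k + s := by omega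
        rw [hrec, h2, h3, ih s hsle]
        have harg : ((s:ℝ) + s) / 2 ^ (k+1) = (s:ℝ) / 2 ^ k := by
          field_simp; ring
        push_cast
        rw [harg]
        ring
      · -- odd case : r = 2 * s + 1
        subst hs
        have hslt : s < 2 ^ k := by omega
        have hrec := hSrec (2 ^ (k+1) + (2 * s + 1)) (by
          have : 1 ≤ 2 ^ k := Nat.one_le_two_pow
          omega)
        have h2 : (2 ^ (k+1) + (2 * s + 1)) / 2 = 2 ^ k + s := by omega
        have h3 : (2 ^ (k+1) + (2 * s + 1) + 1) / 2 = 2 ^ k + (s + 1) := by omega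
        rw [hrec, h2, h3, ih s (le_of_lt hslt), ih (s + 1) hslt]
        have hm := hmid k s hslt
        push_cast
        linear_combination (-(α + β - 1) * (α + β) ^ k) * hm
  intro n hn
  set k := Nat.log 2 n with hk
  have h1 : 2 ^ k ≤ n := Nat.pow_log_le_self 2 (by omega)
  have h2 : n < 2 ^ (k + 1) := Nat.lt_pow_succ_log_self (by norm_num) n
  set r := n - 2 ^ k with hrdef
  have hn' : n = 2 ^ k + r := by omega
  have hrle : r ≤ 2 ^ k := by
    have : (2:ℕ) ^ (k + 1) = 2 ^ k + 2 ^ k := by ring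
    omega
  have hS := key k r hrle
  rw [← hn'] at hS
  have hnpos : (0:ℝ) < (n:ℝ) := by exact_mod_cast Nat.pos_of_ne_zero (by omega)
  have hfl : ⌊Real.logb 2 (n : ℝ)⌋ = (k : ℤ) := by
    rw [show (2:ℝ) = ((2:ℕ):ℝ) by norm_num,
      Real.floor_logb_natCast (le_of_lt hnpos), Int.log_natCast]
  have hpk : (0:ℝ) < (2:ℝ) ^ k := by positivity
  have hfr : (2 : ℝ) ^ Int.fract (Real.logb 2 (n : ℝ)) - 1 = (r : ℝ) / 2 ^ k := by
    rw [Int.fract, hfl]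
    rw [Real.rpow_sub (by norm_num : (0:ℝ) < 2)]
    rw [Real.rpow_logb (by norm_num) (by norm_num) hnpos]
    rw [Int.cast_natCast, Real.rpow_natCast]
    have hcast : (n : ℝ) = 2 ^ k + (r : ℝ) := by
      rw [hn']; push_cast; ring
    rw [hcast]
    field_simp
    ring
  rw [hfr, hfl, zpow_natCast, hS]
end

section
/- Let α, β > 0 and ν(k) the number of 1s in the binary expansion of k. Then the partial sum f(n) := Σ_{0 ≤ k < n} α^{ν(k)} satisfies f(1) = 1 and f(n) = α f(⌊n/2⌋) + f(⌈n/2⌉) for all n ≥ 2; consequently f(n) = S_{α,1}(n), the solution of Λ_{α,1}[f] = 0 with f(1) = 1. -/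
/-- `ν(k)`, the number of 1s in the binary expansion of `k`. -/
def nu (k : ℕ) : ℕ := (Nat.digits 2 k).sum

lemma nu_two_mul (k : ℕ) : nu (2 * k) = nu k := by
  rcases Nat.eq_zero_or_pos k with h | h
  · simp [h]
  unfold nu
  rw [Nat.digits_def' (by norm_num : 1 < 2) (by omega)]
  have h1 : 2 * k % 2 = 0 := by omega
  have h2 : 2 * k / 2 = k := by omega
  simp [h1, h2]

lemma nu_two_mul_add_one (k : ℕ) : nu (2 * k + 1) = nu k + 1 := by
  unfold nu
  rw [Nat.digits_def' (by norm_num : 1 < 2) (by omega)]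
  have h1 : (2 * k + 1) % 2 = 1 := by omega
  have h2 : (2 * k + 1) / 2 = k := by omega
  simp only [List.sum_cons, h1, h2]
  omega

lemma key (α : ℝ) (n : ℕ) :
    (∑ k ∈ Finset.range n, α ^ nu k) =
      α * (∑ k ∈ Finset.range (n / 2), α ^ nu k) +
        ∑ k ∈ Finset.range ((n + 1) / 2), α ^ nu k := by
  induction n using Nat.strong_induction_on with
  | _ n ih =>
    match n with
    | 0 => simp
    | 1 => simp [nu]
    | (m + 2) =>
      have hm := ih m (by omega)
      have e1 : (m + 2) / 2 = m / 2 + 1 := by omega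
      have e2 : (m + 3) / 2 = (m + 1) / 2 + 1 := by omega
      rw [Finset.sum_range_succ, Finset.sum_range_succ, e1, e2,
        Finset.sum_range_succ, Finset.sum_range_succ, hm]
      rcases Nat.even_or_odd m with ⟨j, hj⟩ | ⟨j, hj⟩
      · have h2 : m / 2 = j := by omega
        have h3 : (m + 1) / 2 = j := by omega
        have n1 : nu m = nu j := by
          rw [show m = 2 * j by omega, nu_two_mul]
        have n2 : nu (m + 1) = nu j + 1 := by
          rw [show m + 1 = 2 * j + 1 by omega, nu_two_mul_add_one]
        rw [h2, h3, n1, n2]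
        ring
      · have h2 : m / 2 = j := by omega
        have h3 : (m + 1) / 2 = j + 1 := by omega
        have n1 : nu m = nu j + 1 := by
          rw [show m = 2 * j + 1 by omega, nu_two_mul_add_one]
        have n2 : nu (m + 1) = nu (j + 1) := by
          rw [show m + 1 = 2 * (j + 1) by omega, nu_two_mul]
        rw [h2, h3, n1, n2]
        ring

/-- The partial sum `f(n) = Σ_{0≤k<n} α^{ν(k)}` satisfies `f(1) = 1` and
`f(n) = α f(⌊n/2⌋) + f(⌈n/2⌉)` for `n ≥ 2`; hence `f = S_{α,1}`, the solution of
`Λ_{α,1}[S] = 0` with `S(1) = 1`. -/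
theorem sum_digits_generating (α : ℝ) (hα : 0 < α)
    (f : ℕ → ℝ) (hf : ∀ n : ℕ, f n = ∑ k ∈ Finset.range n, α ^ nu k)
    (S : ℕ → ℝ) (hS1 : S 1 = 1)
    (hSrec : ∀ n : ℕ, 2 ≤ n → S n = α * S (n / 2) + 1 * S ((n + 1) / 2)) :
    f 1 = 1 ∧ (∀ n : ℕ, 2 ≤ n → f n = α * f (n / 2) + f ((n + 1) / 2)) ∧
    ∀ n : ℕ, 1 ≤ n → f n = S n := by
  have hrec : ∀ n : ℕ, f n = α * f (n / 2) + f ((n + 1) / 2) := by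
    intro n
    rw [hf, hf, hf]
    exact key α n
  have hf1 : f 1 = 1 := by rw [hf]; simp [nu]
  refine ⟨hf1, fun n _ => hrec n, ?_⟩
  intro n hn
  induction n using Nat.strong_induction_on with
  | _ n ih =>
    match n, hn with
    | 1, _ => rw [hf1, hS1]
    | (m + 2), _ =>
      rw [hrec (m + 2), hSrec (m + 2) (by omega), one_mul,
        ih ((m + 2) / 2) (by omega) (by omega),
        ih ((m + 3) / 2) (by omega) (by omega)]
end

section
/- Let α, β > 0 with α + β > 1. Let ν(k) and ν₀(k) be the numbers of 1s and of 0s in the binary expansion of k (with ν₀(0) := 0), and f(n) := Σ_{0 ≤ k < n} α^{ν(k)} β^{ν₀(k)}. Then f(1) = 1, f(n) = α f(⌊n/2⌋) + β f(⌈n/2⌉) + (1 − β) for n ≥ 2, and f(n) = (α/(α+β−1))·S_{α,β}(n) + (β−1)/(α+β−1) for all n ≥ 1. -/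
/-- `ν₀(k)`, the number of 0s in the binary expansion of `k` (with `ν₀(0) = 0`). -/
def nuZero (k : ℕ) : ℕ := (Nat.digits 2 k).count 0

lemma digits_two_odd (j : ℕ) : Nat.digits 2 (2*j+1) = 1 :: Nat.digits 2 j := by
  have h1 : (2*j+1) % 2 = 1 := by omega
  have h2 : (2*j+1) / 2 = j := by omega
  rw [Nat.digits_def' (by norm_num : 1 < 2) (by omega), h1, h2]

lemma digits_two_even (j : ℕ) (hj : 1 ≤ j) : Nat.digits 2 (2*j) = 0 :: Nat.digits 2 j := by
  have h1 : (2*j) % 2 = 0 := by omega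
  have h2 : (2*j) / 2 = j := by omega
  rw [Nat.digits_def' (by norm_num : 1 < 2) (by omega), h1, h2]

lemma nu_odd (j : ℕ) : nu (2*j+1) = nu j + 1 := by
  simp only [nu, digits_two_odd, List.sum_cons]; omega

lemma nuZero_odd (j : ℕ) : nuZero (2*j+1) = nuZero j := by
  simp only [nuZero, digits_two_odd]
  simp

lemma nu_even (j : ℕ) (hj : 1 ≤ j) : nu (2*j) = nu j := by
  simp only [nu, digits_two_even j hj, List.sum_cons]; omega

lemma nuZero_even (j : ℕ) (hj : 1 ≤ j) : nuZero (2*j) = nuZero j + 1 := by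
  simp only [nuZero, digits_two_even j hj]
  simp

lemma sum_range_split (t : ℕ → ℝ) (n : ℕ) :
    ∑ k ∈ Finset.range n, t k
      = (∑ j ∈ Finset.range ((n+1)/2), t (2*j)) + ∑ j ∈ Finset.range (n/2), t (2*j+1) := by
  induction n with
  | zero => simp
  | succ n ih =>
    rcases Nat.even_or_odd n with ⟨m, hm⟩ | ⟨m, hm⟩
    · subst hm
      have h1 : (m + m + 1 + 1) / 2 = m + 1 := by omega
      have h2 : (m + m + 1) / 2 = m := by omega
      have h3 : (m + m + 1) / 2 = m := by omega
      have h4 : (m + m) / 2 = m := by omega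
      rw [Finset.sum_range_succ, ih, h1, h2, h4, Finset.sum_range_succ]
      have : 2 * m = m + m := by ring
      rw [this]; ring
    · subst hm
      have h1 : (2*m + 1 + 1) / 2 = m + 1 := by omega
      have h2 : (2*m + 1) / 2 = m := by omega
      have h3 : (2*m + 1 + 1 + 1) / 2 = m + 1 := by omega
      rw [Finset.sum_range_succ, ih, h2, h1, h3, Finset.sum_range_succ,
        Finset.sum_range_succ]
      ring

/-- For `α, β > 0` with `α+β > 1`, the partial sum `f(n) = Σ_{0≤k<n} α^{ν(k)} β^{ν₀(k)}`
satisfies `f(1) = 1`, `f(n) = α f(⌊n/2⌋) + β f(⌈n/2⌉) + (1−β)` for `n ≥ 2`, and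
`f(n) = (α/(α+β−1)) S_{α,β}(n) + (β−1)/(α+β−1)` for all `n ≥ 1`. -/
theorem sum_digits_two_params (α β : ℝ) (hα : 0 < α) (hβ : 0 < β) (hab : 1 < α + β)
    (f : ℕ → ℝ) (hf : ∀ n : ℕ, f n = ∑ k ∈ Finset.range n, α ^ nu k * β ^ nuZero k)
    (S : ℕ → ℝ) (hS1 : S 1 = 1)
    (hSrec : ∀ n : ℕ, 2 ≤ n → S n = α * S (n / 2) + β * S ((n + 1) / 2)) :
    f 1 = 1 ∧
    (∀ n : ℕ, 2 ≤ n → f n = α * f (n / 2) + β * f ((n + 1) / 2) + (1 - β)) ∧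
    ∀ n : ℕ, 1 ≤ n → f n = α / (α + β - 1) * S n + (β - 1) / (α + β - 1) := by
  set t : ℕ → ℝ := fun k => α ^ nu k * β ^ nuZero k with ht
  have ht0 : t 0 = 1 := by simp [ht, nu, nuZero]
  have htodd : ∀ j, t (2*j+1) = α * t j := by
    intro j; simp [ht, nu_odd, nuZero_odd, pow_succ]; ring
  have hteven : ∀ j, 1 ≤ j → t (2*j) = β * t j := by
    intro j hj; simp [ht, nu_even j hj, nuZero_even j hj, pow_succ]; ring
  have hf1 : f 1 = 1 := by rw [hf]; simpa using ht0
  have hrec : ∀ n : ℕ, 2 ≤ n → f n = α * f (n / 2) + β * f ((n + 1) / 2) + (1 - β) := by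
    intro n hn
    rw [hf, hf, hf, sum_range_split]
    have hodd : ∑ j ∈ Finset.range (n/2), t (2*j+1) = α * ∑ k ∈ Finset.range (n/2), t k := by
      rw [Finset.mul_sum]; exact Finset.sum_congr rfl fun j _ => htodd j
    have heven : ∑ j ∈ Finset.range ((n+1)/2), t (2*j)
        = β * (∑ k ∈ Finset.range ((n+1)/2), t k) + (1 - β) := by
      have hM : 1 ≤ (n+1)/2 := by omega
      have : ∑ j ∈ Finset.range ((n+1)/2), (t (2*j) - β * t j) = 1 - β := by
        rw [Finset.sum_eq_single_of_mem 0 (Finset.mem_range.mpr hM)]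
        · simp [ht0]
        · intro j _ hj
          rw [hteven j (by omega)]; ring
      have := this
      rw [Finset.sum_sub_distrib, ← Finset.mul_sum] at this
      linarith
    rw [hodd, heven]; ring
  refine ⟨hf1, hrec, ?_⟩
  have hc : α + β - 1 ≠ 0 := by linarith
  intro n
  induction n using Nat.strong_induction_on with
  | _ n ih =>
    intro hn
    rcases eq_or_lt_of_le hn with h1 | h2
    · rw [← h1, hf1, hS1]
      field_simp
      ring
    · have hn2 : 2 ≤ n := h2
      have ha : f (n/2) = α / (α + β - 1) * S (n/2) + (β - 1) / (α + β - 1) :=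
        ih (n/2) (by omega) (by omega)
      have hb : f ((n+1)/2) = α / (α + β - 1) * S ((n+1)/2) + (β - 1) / (α + β - 1) :=
        ih ((n+1)/2) (by omega) (by omega)
      rw [hrec n hn2, ha, hb, hSrec n hn2]
      field_simp
      ring
end

section
/- Let α ≠ 1/2 be real, L_k := ⌊log₂ k⌋, and f(n) := Σ_{1 ≤ k < n} α^{L_k}. Then f(n) = (S_{α,α}(n) − 1)/(2α − 1) for all n ≥ 1, where S_{α,α}(1)=1 and S_{α,α}(n) = α(S_{α,α}(⌊n/2⌋) + S_{α,α}(⌈n/2⌉)) for n ≥ 2. -/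
/-- For real `α ≠ 1/2`, the partial sum `f(n) = Σ_{1≤k<n} α^{⌊log₂ k⌋}` satisfies
`f(n) = (S_{α,α}(n) − 1)/(2α − 1)` for all `n ≥ 1`, where `S_{α,α}(1) = 1` and
`S_{α,α}(n) = α(S_{α,α}(⌊n/2⌋) + S_{α,α}(⌈n/2⌉))` for `n ≥ 2`. -/
theorem sum_log_powers (α : ℝ) (hα : α ≠ 1 / 2)
    (f : ℕ → ℝ) (hf : ∀ n : ℕ, f n = ∑ k ∈ Finset.Ico 1 n, α ^ Nat.log 2 k)
    (S : ℕ → ℝ) (hS1 : S 1 = 1)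
    (hSrec : ∀ n : ℕ, 2 ≤ n → S n = α * (S (n / 2) + S ((n + 1) / 2))) :
    ∀ n : ℕ, 1 ≤ n → f n = (S n - 1) / (2 * α - 1) := by
  have h2 : 2 * α - 1 ≠ 0 := by
    intro h
    apply hα
    linarith
  -- key recursion for f
  have key : ∀ n : ℕ, 2 ≤ n → f n = α * (f (n / 2) + f ((n + 1) / 2)) + 1 := by
    intro n hn
    induction n, hn using Nat.le_induction with
    | base => simp [hf]
    | succ n hn ih =>
      have hstep : f (n + 1) = f n + α ^ Nat.log 2 n := by
        rw [hf (n + 1), hf n, Finset.sum_Ico_succ_top (by omega)]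
      have hd1 : (n + 1 + 1) / 2 = n / 2 + 1 := by omega
      have hd2 : f (n / 2 + 1) = f (n / 2) + α ^ Nat.log 2 (n / 2) := by
        rw [hf (n / 2 + 1), hf (n / 2), Finset.sum_Ico_succ_top (by omega)]
      have hlog : Nat.log 2 n = Nat.log 2 (n / 2) + 1 := by
        have h1 := Nat.log_div_base 2 n
        have h2 : 1 ≤ Nat.log 2 n := Nat.log_pos (by norm_num) hn
        omega
      rw [hstep, hd1, hd2, ih, hlog]
      ring
  intro n
  induction n using Nat.strong_induction_on with
  | _ n ih =>
    intro hn
    rcases eq_or_lt_of_le hn with h | h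
    · rw [← h, hf, hS1]
      simp
    · have hn2 : 2 ≤ n := h
      have ih1 := ih (n / 2) (by omega) (by omega)
      have ih2 := ih ((n + 1) / 2) (by omega) (by omega)
      rw [key n hn2, hSrec n hn2, ih1, ih2]
      rw [eq_div_iff h2, ← add_div, mul_div_assoc', add_mul, div_mul_cancel₀ _ h2]
      ring
end

section
/- For α > 0 define P₀(t) := (1 + (2α − 1)(2^{{t}} − 1))·(2α)^{−{t}}, where {t} is the fractional part. Then the solution of f(1)=1, f(n) = α f(⌊n/2⌋) + α f(⌈n/2⌉) (n ≥ 2) satisfies f(n) = n^{log₂(2α)} P₀(log₂ n); in particular, for α = 2, f(n) = n² · 2^{−{log₂ n}}(3 − 2^{1−{log₂ n}}) = 2^{L_n}(3n − 2^{L_n+1}) with L_n = ⌊log₂ n⌋. -/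
/-- For `α > 0`, the solution of `f(1) = 1`, `f(n) = α f(⌊n/2⌋) + α f(⌈n/2⌉)` (`n ≥ 2`)
satisfies `f(n) = n^{log₂(2α)} P₀(log₂ n)` with
`P₀(t) = (1 + (2α−1)(2^{{t}} − 1))·(2α)^{−{t}}`; in particular, for `α = 2`,
`f(n) = 2^{L_n}(3n − 2^{L_n+1})` where `L_n = ⌊log₂ n⌋`. -/
theorem equal_weights_solution (α : ℝ) (hα : 0 < α)
    (f : ℕ → ℝ) (hf1 : f 1 = 1)
    (hfrec : ∀ n : ℕ, 2 ≤ n → f n = α * f (n / 2) + α * f ((n + 1) / 2))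
    (P₀ : ℝ → ℝ)
    (hP₀ : ∀ t : ℝ, P₀ t
      = (1 + (2 * α - 1) * ((2 : ℝ) ^ Int.fract t - 1)) * (2 * α) ^ (-(Int.fract t))) :
    (∀ n : ℕ, 1 ≤ n →
      f n = (n : ℝ) ^ Real.logb 2 (2 * α) * P₀ (Real.logb 2 (n : ℝ))) ∧
    (α = 2 → ∀ n : ℕ, 1 ≤ n →
      f n = (2 : ℝ) ^ Nat.log 2 n * (3 * (n : ℝ) - 2 ^ (Nat.log 2 n + 1))) := by
  have key : ∀ n : ℕ, 1 ≤ n →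
      f n = (2*α-1) * n * α ^ (Nat.log 2 n) + (2-2*α) * (2*α) ^ (Nat.log 2 n) := by
    intro n
    induction n using Nat.strong_induction_on with
    | _ n ih =>
      intro hn
      rcases eq_or_lt_of_le hn with h1 | h2
      · rw [← h1]
        simp [hf1.symm ▸ hf1]
        norm_num [hf1]
      · -- n ≥ 2
        have hn2 : 2 ≤ n := h2
        set L := Nat.log 2 n with hLdef
        have hL1 : 1 ≤ L := Nat.le_log_of_pow_le (by norm_num) (by omega)
        set M := L - 1 with hMdef
        have hLM : L = M + 1 := by omega
        have hpow1 : 2 ^ L ≤ n := Nat.pow_log_le_self 2 (by omega)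
        have hpow2 : n < 2 ^ (L + 1) := Nat.lt_pow_succ_log_self (by norm_num) n
        have hloga : Nat.log 2 (n / 2) = M := Nat.log_div_base 2 n
        have hfa : f (n / 2) = (2*α-1) * (↑(n/2)) * α ^ M + (2-2*α) * (2*α) ^ M := by
          rw [ih (n/2) (by omega) (by omega), hloga]
        have hfb : f ((n+1) / 2) = (2*α-1) * (↑((n+1)/2)) * α ^ M + (2-2*α) * (2*α) ^ M := by
          by_cases hb : (n+1)/2 = 2 ^ L
          · have hlogb : Nat.log 2 ((n+1)/2) = M + 1 := by
              rw [hb, Nat.log_pow (by norm_num), hLM]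
            rw [ih ((n+1)/2) (by omega) (by omega), hlogb, hb]
            have hcast : ((2^(M+1) : ℕ) : ℝ) = 2 * 2^M := by push_cast [pow_succ]; ring
            rw [hLM, hcast, pow_succ, pow_succ]
            have h2a : ((2*α) ^ M : ℝ) = 2^M * α^M := by
              rw [mul_pow]
            rw [h2a]; ring
          · have hlogb : Nat.log 2 ((n+1)/2) = M := by
              apply Nat.log_eq_of_pow_le_of_lt_pow
              · have := hpow1; rw [hLM] at this
                have : 2 * 2^M ≤ n := by rw [pow_succ] at this; omega
                omega
              · have h2L : (2:ℕ)^(M+1) = 2^L := by rw [hLM]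
                have h2L1 : (2:ℕ)^(L+1) = 2 * 2^L := by rw [pow_succ]; ring
                omega
            rw [ih ((n+1)/2) (by omega) (by omega), hlogb]
        rw [hfrec n hn2, hfa, hfb]
        have habn : n / 2 + (n + 1) / 2 = n := by omega
        have hcastn : (n : ℝ) = (↑(n/2) : ℝ) + (↑((n+1)/2) : ℝ) := by
          exact_mod_cast habn.symm
        rw [hLM, hcastn, pow_succ, pow_succ]
        ring
  constructor
  · intro n hn
    have hn0 : (0:ℝ) < n := by exact_mod_cast hn
    have h2a : (0:ℝ) < 2 * α := by linarith
    set t := Real.logb 2 (n : ℝ) with ht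
    set L := Nat.log 2 n with hL
    have hfloor : ⌊t⌋ = (L : ℤ) := by
      rw [ht, show ((2:ℝ)) = ((2:ℕ):ℝ) by norm_num,
        Real.floor_logb_natCast (by positivity : (0:ℝ) ≤ (n:ℝ)), Int.log_natCast]
    have hfract : Int.fract t = t - L := by
      rw [Int.fract, hfloor]; push_cast; ring
    have h2t : (2:ℝ) ^ t = n := Real.rpow_logb (by norm_num) (by norm_num) hn0
    have h2f : (2:ℝ) ^ Int.fract t = (n : ℝ) / 2 ^ L := by
      rw [hfract, Real.rpow_sub (by norm_num), h2t, Real.rpow_natCast]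
    have hnp : (n : ℝ) ^ Real.logb 2 (2*α) = (2*α) ^ t := by
      rw [← h2t, ← Real.rpow_mul (by norm_num : (0:ℝ) ≤ 2),
        mul_comm t (Real.logb 2 (2*α)), Real.rpow_mul (by norm_num : (0:ℝ) ≤ 2),
        Real.rpow_logb (by norm_num) (by norm_num) h2a]
    have hcomb : (2*α) ^ t * (2*α) ^ (-(Int.fract t)) = (2*α) ^ (L:ℕ) := by
      rw [← Real.rpow_add h2a, hfract, ← Real.rpow_natCast (2*α) L]
      congr 1; ring
    rw [key n hn, hP₀, hnp, h2f]
    have h2Lne : ((2:ℝ) ^ L) ≠ 0 := by positivity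
    have expand : ((2*α):ℝ)^L = 2^L * α^L := mul_pow 2 α L
    calc (2*α-1) * ↑n * α ^ L + (2-2*α) * (2*α) ^ L
        = (1 + (2 * α - 1) * ((n:ℝ) / 2^L - 1)) * ((2*α) ^ t * (2*α) ^ (-(Int.fract t))) := by
          rw [hcomb, expand]; field_simp; ring
      _ = (2*α) ^ t * ((1 + (2 * α - 1) * ((n:ℝ) / 2^L - 1)) * (2*α) ^ (-(Int.fract t))) := by
          ring
  · intro hα2 n hn
    rw [key n hn, hα2]
    norm_num
    have : ((2*2:ℝ)) ^ (Nat.log 2 n) = 2 ^ (Nat.log 2 n) * 2 ^ (Nat.log 2 n) := mul_pow 2 2 _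
    rw [show ((4:ℝ)) = 2*2 by norm_num, this, pow_succ]
    ring
end

section
/- Let α, β > 0 be real numbers with β ≥ α and β ≥ 1 (or alternatively α ≥ β and α + β ≤ 1). Define u(1) = 1 and u(n) = min_{1 ≤ k ≤ ⌊n/2⌋} (α u(k) + β u(n−k)) for n ≥ 2. Then the minimum is attained at k = ⌊n/2⌋; i.e., u(n) = α u(⌊n/2⌋) + β u(⌈n/2⌉) for all n ≥ 2, so u(n) = S_{α,β}(n). -/
section Aux
variable (α β : ℝ) (S : ℕ → ℝ)

private lemma Deven (hSrec : ∀ n : ℕ, 2 ≤ n → S n = α * S (n / 2) + β * S ((n + 1) / 2))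
    (t : ℕ) (ht : 1 ≤ t) : S (2*t+1) - S (2*t) = β * (S (t+1) - S t) := by
  have h1 := hSrec (2*t) (by omega)
  have h2 := hSrec (2*t+1) (by omega)
  have e1 : (2*t)/2 = t := by omega
  have e2 : (2*t+1)/2 = t := by omega
  have e3 : (2*t+1+1)/2 = t+1 := by omega
  rw [e1, e2] at h1
  rw [e2, e3] at h2
  linarith

private lemma Dodd (hSrec : ∀ n : ℕ, 2 ≤ n → S n = α * S (n / 2) + β * S ((n + 1) / 2))
    (t : ℕ) (ht : 1 ≤ t) : S (2*t+2) - S (2*t+1) = α * (S (t+1) - S t) := by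
  have h1 := hSrec (2*t+1) (by omega)
  have h2 := hSrec (2*t+2) (by omega)
  have e2 : (2*t+1)/2 = t := by omega
  have e3 : (2*t+1+1)/2 = t+1 := by omega
  have e4 : (2*t+2)/2 = t+1 := by omega
  have e5 : (2*t+2+1)/2 = t+1 := by omega
  rw [e2, e3] at h1
  rw [e4, e5] at h2
  linarith

private lemma wProd (hα : 0 < α) (hβ : 0 < β) (hS1 : S 1 = 1)
    (hSrec : ∀ n : ℕ, 2 ≤ n → S n = α * S (n / 2) + β * S ((n + 1) / 2)) :
    ∀ n : ℕ, 1 ≤ n → ∃ w : ℝ, 0 < w ∧ S (n+1) - S n = (α + β - 1) * w := by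
  intro n
  induction n using Nat.strong_induction_on with
  | _ n ih =>
    intro hn
    rcases Nat.lt_or_ge n 2 with h2 | h2
    · have hn1 : n = 1 := by omega
      subst hn1
      have h := hSrec 2 le_rfl
      norm_num at h
      exact ⟨1, one_pos, by rw [hS1] at h; linarith⟩
    · rcases Nat.even_or_odd n with ⟨t, ht⟩ | ⟨t, ht⟩
      · -- n = 2t
        have ht1 : 1 ≤ t := by omega
        obtain ⟨w, hw, he⟩ := ih t (by omega) ht1
        refine ⟨β * w, by positivity, ?_⟩
        have := Deven α β S hSrec t ht1
        rw [show n = 2*t by omega]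
        rw [this, he]; ring
      · have ht1 : 1 ≤ t := by omega
        obtain ⟨w, hw, he⟩ := ih t (by omega) ht1
        refine ⟨α * w, by positivity, ?_⟩
        have := Dodd α β S hSrec t ht1
        rw [show n = 2*t+1 by omega, show 2*t+1+1 = 2*t+2 from rfl]
        rw [this, he]; ring

private lemma Wsum (hα : 0 < α) (hβ : 0 < β) (hS1 : S 1 = 1)
    (hSrec : ∀ n : ℕ, 2 ≤ n → S n = α * S (n / 2) + β * S ((n + 1) / 2)) :
    ∀ n : ℕ, 1 ≤ n → ∃ W : ℝ, 0 ≤ W ∧ S n = 1 + (α + β - 1) * W := by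
  intro n hn
  induction n, hn using Nat.le_induction with
  | base => exact ⟨0, le_rfl, by rw [hS1]; ring⟩
  | succ m hm ih =>
    obtain ⟨W, hW, he⟩ := ih
    obtain ⟨w, hw, hwe⟩ := wProd α β S hα hβ hS1 hSrec m hm
    exact ⟨W + w, by positivity, by rw [mul_add]; linarith⟩

end Aux

section Aux2
variable (α β : ℝ) (S : ℕ → ℝ)

private lemma Dba (hα : 0 < α) (hβ : 0 < β)
    (hcase : (α ≤ β ∧ 1 ≤ β) ∨ (β ≤ α ∧ α + β ≤ 1))
    (hS1 : S 1 = 1)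
    (hSrec : ∀ n : ℕ, 2 ≤ n → S n = α * S (n / 2) + β * S ((n + 1) / 2))
    (n : ℕ) (hn : 1 ≤ n) : 0 ≤ (β - α) * (S (n+1) - S n) := by
  obtain ⟨w, hw, he⟩ := wProd α β S hα hβ hS1 hSrec n hn
  rw [he]
  rcases hcase with ⟨h1, h2⟩ | ⟨h1, h2⟩
  · nlinarith [mul_nonneg (mul_nonneg (show (0:ℝ) ≤ β - α by linarith)
      (show (0:ℝ) ≤ α + β - 1 by linarith)) hw.le]
  · nlinarith [mul_nonneg (mul_nonneg (show (0:ℝ) ≤ α - β by linarith)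
      (show (0:ℝ) ≤ 1 - α - β by linarith)) hw.le]

private lemma Clem (hα : 0 < α) (hβ : 0 < β)
    (hcase : (α ≤ β ∧ 1 ≤ β) ∨ (β ≤ α ∧ α + β ≤ 1))
    (hS1 : S 1 = 1)
    (hSrec : ∀ n : ℕ, 2 ≤ n → S n = α * S (n / 2) + β * S ((n + 1) / 2)) :
    ∀ q : ℕ, 1 ≤ q → α * (S (q+1) - S q) ≤ β * (S (q+2) - S (q+1)) := by
  intro q
  induction q using Nat.strong_induction_on with
  | _ q ih =>
    intro hq
    rcases Nat.lt_or_ge q 2 with h2 | h2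
    · have hq1 : q = 1 := by omega
      subst hq1
      have hd1 : S 2 - S 1 = (α + β) - 1 := by
        have h := hSrec 2 le_rfl; norm_num at h; rw [hS1] at h ⊢; linarith
      have hd2 : S 3 - S 2 = β * (S 2 - S 1) := by
        have := Deven α β S hSrec 1 le_rfl; norm_num at this; exact this
      rw [hd2, hd1]
      rcases hcase with ⟨h1, h2⟩ | ⟨h1, h2⟩
      · nlinarith [mul_nonneg (show (0:ℝ) ≤ β * β - α by nlinarith)
          (show (0:ℝ) ≤ α + β - 1 by linarith)]
      · have hb1 : β ≤ 1 := by linarith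
        have hbb : β * β ≤ α := by nlinarith
        nlinarith [mul_nonneg (show (0:ℝ) ≤ α - β * β by linarith)
          (show (0:ℝ) ≤ 1 - α - β by linarith)]
    · rcases Nat.even_or_odd q with ⟨t, ht⟩ | ⟨t, ht⟩
      · -- q = 2t
        have ht1 : 1 ≤ t := by omega
        have hd1 : S (2*t+1) - S (2*t) = β * (S (t+1) - S t) := Deven α β S hSrec t ht1
        have hd2 : S (2*t+2) - S (2*t+1) = α * (S (t+1) - S t) := Dodd α β S hSrec t ht1
        rw [show q = 2*t by omega, show 2*t+1+1 = 2*t+2 from rfl, hd1, hd2]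
        linarith [mul_comm α β]
      · -- q = 2t+1
        have ht1 : 1 ≤ t := by omega
        have hd1 : S (2*t+2) - S (2*t+1) = α * (S (t+1) - S t) := Dodd α β S hSrec t ht1
        have hd2 : S (2*(t+1)+1) - S (2*(t+1)) = β * (S (t+1+1) - S (t+1)) :=
          Deven α β S hSrec (t+1) (by omega)
        have hih := ih t (by omega) ht1
        have hsign := Dba α β S hα hβ hcase hS1 hSrec (t+1) (by omega)
        rw [show q = 2*t+1 by omega, show 2*t+1+1 = 2*(t+1) by ring,
            show 2*t+1+2 = 2*(t+1)+1 by ring, hd2]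
        rw [show 2*(t+1) = 2*t+2 by ring, hd1]
        nlinarith

private lemma keyA (hα : 0 < α) (hβ : 0 < β)
    (hcase : (α ≤ β ∧ 1 ≤ β) ∨ (β ≤ α ∧ α + β ≤ 1))
    (hS1 : S 1 = 1)
    (hSrec : ∀ n : ℕ, 2 ≤ n → S n = α * S (n / 2) + β * S ((n + 1) / 2)) :
    ∀ n : ℕ, 2 ≤ n → ∀ k : ℕ, 1 ≤ k → 2 * k ≤ n → S n ≤ α * S k + β * S (n - k) := by
  have hseven : ∀ t : ℕ, 1 ≤ t → S (2*t) = α * S t + β * S t := by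
    intro t ht
    have := hSrec (2*t) (by omega)
    rwa [show (2*t)/2 = t by omega, show (2*t+1)/2 = t by omega] at this
  have hsodd : ∀ t : ℕ, 1 ≤ t → S (2*t+1) = α * S t + β * S (t+1) := by
    intro t ht
    have := hSrec (2*t+1) (by omega)
    rwa [show (2*t+1)/2 = t by omega, show (2*t+1+1)/2 = t+1 by omega] at this
  intro n
  induction n using Nat.strong_induction_on with
  | _ n ih =>
    intro hn k hk1 hk2
    rcases Nat.lt_or_ge k 2 with hklt | hk2'
    · -- k = 1
      have hk : k = 1 := by omega
      subst hk
      rcases Nat.lt_or_ge n 3 with hn3 | hn3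
      · -- n = 2
        have hn2 : n = 2 := by omega
        subst hn2
        have h := hseven 1 le_rfl
        norm_num at h ⊢
        rw [h, hS1]
      · rcases Nat.even_or_odd n with ⟨m, hm⟩ | ⟨m, hm⟩
        · -- n = 2m, m ≥ 2
          have hm2 : 2 ≤ m := by omega
          have h2m := hseven m (by omega)
          have h2m1 := hsodd (m-1) (by omega)
          rw [show (m-1)+1 = m by omega] at h2m1
          have ihm := ih m (by omega) hm2 1 le_rfl (by omega)
          rw [hS1] at ihm
          obtain ⟨W, hW0, hW⟩ := Wsum α β S hα hβ hS1 hSrec m (by omega)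
          rw [show n = 2*m by omega, show 2*m - 1 = 2*(m-1)+1 by omega, hS1, h2m, h2m1]
          rw [hW] at ihm ⊢
          rcases hcase with ⟨h1, h2⟩ | ⟨h1, h2⟩
          · nlinarith [mul_le_mul_of_nonneg_left ihm hα.le,
              mul_nonneg (show (0:ℝ) ≤ α + β - 1 by linarith) (show (0:ℝ) ≤ β - α by linarith),
              mul_nonneg (mul_nonneg (mul_nonneg (show (0:ℝ) ≤ α + β - 1 by linarith) hβ.le)
                (show (0:ℝ) ≤ β - 1 by linarith)) hW0]
          · nlinarith [mul_le_mul_of_nonneg_left ihm hα.le,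
              mul_nonneg (show (0:ℝ) ≤ α - β by linarith) (show (0:ℝ) ≤ 1 - α - β by linarith),
              mul_nonneg (mul_nonneg (mul_nonneg (show (0:ℝ) ≤ 1 - α - β by linarith) hβ.le)
                (show (0:ℝ) ≤ 1 - β by linarith)) hW0]
        · -- n = 2m+1, m ≥ 1
          have hm1 : 1 ≤ m := by omega
          have h2m1 := hsodd m hm1
          have h2m := hseven m hm1
          have ihm := ih (m+1) (by omega) (by omega) 1 le_rfl (by omega)
          rw [hS1, show m+1-1 = m by omega] at ihm
          obtain ⟨W, hW0, hW⟩ := Wsum α β S hα hβ hS1 hSrec m hm1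
          rw [show n = 2*m+1 by omega, show 2*m+1 - 1 = 2*m by omega, hS1, h2m1, h2m]
          rw [hW] at ihm ⊢
          rcases hcase with ⟨h1, h2⟩ | ⟨h1, h2⟩
          · nlinarith [mul_le_mul_of_nonneg_left ihm hβ.le,
              mul_nonneg (mul_nonneg (mul_nonneg (show (0:ℝ) ≤ β - 1 by linarith)
                (show (0:ℝ) ≤ α + β - 1 by linarith)) hα.le) hW0]
          · nlinarith [mul_le_mul_of_nonneg_left ihm hβ.le,
              mul_nonneg (mul_nonneg (mul_nonneg (show (0:ℝ) ≤ 1 - β by linarith)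
                (show (0:ℝ) ≤ 1 - α - β by linarith)) hα.le) hW0]
    · -- k ≥ 2
      rcases Nat.even_or_odd n with ⟨m, hm⟩ | ⟨m, hm⟩
      · rcases Nat.even_or_odd k with ⟨j, hj⟩ | ⟨j, hj⟩
        · -- n = 2m, k = 2j, j ≥ 1
          have hj1 : 1 ≤ j := by omega
          have ih1 := ih m (by omega) (by omega) j hj1 (by omega)
          have e1 := hseven m (by omega)
          have e2 := hseven j hj1
          have e3 := hseven (m - j) (by omega)
          rw [show n = 2*m by omega, show k = 2*j by omega,
            show 2*m - 2*j = 2*(m-j) by omega, e1, e2, e3]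
          nlinarith [mul_le_mul_of_nonneg_left ih1 hα.le,
            mul_le_mul_of_nonneg_left ih1 hβ.le]
        · -- n = 2m, k = 2j+1, j ≥ 1, m ≥ 3
          have hj1 : 1 ≤ j := by omega
          have hm3 : 3 ≤ m := by omega
          have ih1 := ih (m-1) (by omega) (by omega) j hj1 (by omega)
          have ih2 := ih (m+1) (by omega) (by omega) (j+1) (by omega) (by omega)
          rw [show m+1-(j+1) = m-j by omega] at ih2
          have hC := Clem α β S hα hβ hcase hS1 hSrec (m-1) (by omega)
          rw [show m-1+1 = m by omega, show m-1+2 = m+1 by omega] at hC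
          have e1 := hseven m (by omega)
          have e2 := hsodd j hj1
          have e3 := hsodd (m-1-j) (by omega)
          rw [show (m-1-j)+1 = m-j by omega] at e3
          rw [show n = 2*m by omega, show k = 2*j+1 by omega,
            show 2*m - (2*j+1) = 2*(m-1-j)+1 by omega, e1, e2, e3]
          nlinarith [mul_le_mul_of_nonneg_left ih1 hα.le,
            mul_le_mul_of_nonneg_left ih2 hβ.le]
      · rcases Nat.even_or_odd k with ⟨j, hj⟩ | ⟨j, hj⟩
        · -- n = 2m+1, k = 2j, j ≥ 1
          have hj1 : 1 ≤ j := by omega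
          have ih1 := ih m (by omega) (by omega) j hj1 (by omega)
          have ih2 := ih (m+1) (by omega) (by omega) j hj1 (by omega)
          rw [show m+1-j = (m-j)+1 by omega] at ih2
          have e1 := hsodd m (by omega)
          have e2 := hseven j hj1
          have e3 := hsodd (m-j) (by omega)
          rw [show n = 2*m+1 by omega, show k = 2*j by omega,
            show 2*m+1 - 2*j = 2*(m-j)+1 by omega, e1, e2, e3]
          nlinarith [mul_le_mul_of_nonneg_left ih1 hα.le,
            mul_le_mul_of_nonneg_left ih2 hβ.le]
        · -- n = 2m+1, k = 2j+1, j ≥ 1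
          have hj1 : 1 ≤ j := by omega
          have ih1 := ih m (by omega) (by omega) j hj1 (by omega)
          have ih2 := ih (m+1) (by omega) (by omega) (j+1) (by omega) (by omega)
          rw [show m+1-(j+1) = m-j by omega] at ih2
          have e1 := hsodd m (by omega)
          have e2 := hsodd j hj1
          have e3 := hseven (m-j) (by omega)
          rw [show n = 2*m+1 by omega, show k = 2*j+1 by omega,
            show 2*m+1 - (2*j+1) = 2*(m-j) by omega, e1, e2, e3]
          nlinarith [mul_le_mul_of_nonneg_left ih1 hα.le,
            mul_le_mul_of_nonneg_left ih2 hβ.le]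

end Aux2

/-- Let `α, β > 0` with (`β ≥ α` and `β ≥ 1`) or (`α ≥ β` and `α+β ≤ 1`).  If
`u(1) = 1` and `u(n) = min_{1≤k≤⌊n/2⌋}(α u(k) + β u(n−k))` for `n ≥ 2`, then the
minimum is attained at `k = ⌊n/2⌋`, i.e. `u(n) = α u(⌊n/2⌋) + β u(⌈n/2⌉)`, and
`u = S_{α,β}`. -/
theorem min_recurrence (α β : ℝ) (hα : 0 < α) (hβ : 0 < β)
    (hcase : (α ≤ β ∧ 1 ≤ β) ∨ (β ≤ α ∧ α + β ≤ 1))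
    (u : ℕ → ℝ) (hu1 : u 1 = 1)
    (hurec : ∀ n : ℕ, 2 ≤ n →
      IsLeast {x : ℝ | ∃ k : ℕ, 1 ≤ k ∧ k ≤ n / 2 ∧ x = α * u k + β * u (n - k)} (u n))
    (S : ℕ → ℝ) (hS1 : S 1 = 1)
    (hSrec : ∀ n : ℕ, 2 ≤ n → S n = α * S (n / 2) + β * S ((n + 1) / 2)) :
    (∀ n : ℕ, 2 ≤ n → u n = α * u (n / 2) + β * u ((n + 1) / 2)) ∧
    ∀ n : ℕ, 1 ≤ n → u n = S n := by
  have hueq : ∀ n : ℕ, 1 ≤ n → u n = S n := by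
    intro n
    induction n using Nat.strong_induction_on with
    | _ n ih =>
      intro hn
      rcases Nat.lt_or_ge n 2 with h2 | h2
      · have hn1 : n = 1 := by omega
        subst hn1; rw [hu1, hS1]
      · obtain ⟨⟨k0, hk01, hk02, hk0e⟩, hlb⟩ := hurec n h2
        have hub : u n ≤ α * u (n/2) + β * u (n - n/2) :=
          hlb ⟨n/2, by omega, le_rfl, rfl⟩
        have e1 : u (n/2) = S (n/2) := ih (n/2) (by omega) (by omega)
        have e2 : u (n - n/2) = S (n - n/2) := ih (n - n/2) (by omega) (by omega)
        have hS : S n = α * S (n/2) + β * S (n - n/2) := by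
          rw [show n - n/2 = (n+1)/2 by omega]
          exact hSrec n h2
        have ek1 : u k0 = S k0 := ih k0 (by omega) hk01
        have ek2 : u (n - k0) = S (n - k0) := ih (n - k0) (by omega) (by omega)
        have hge := keyA α β S hα hβ hcase hS1 hSrec n h2 k0 hk01 (by omega)
        have h_le : u n ≤ S n := by rw [e1, e2] at hub; linarith
        have h_ge : S n ≤ u n := by rw [hk0e, ek1, ek2]; exact hge
        linarith
  refine ⟨?_, hueq⟩
  intro n hn
  have h1 : u n = S n := hueq n (by omega)
  have h2 : u (n/2) = S (n/2) := hueq _ (by omega)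
  have h3 : u ((n+1)/2) = S ((n+1)/2) := hueq _ (by omega)
  rw [h1, h2, h3]
  exact hSrec n hn
end

section
/- Let α, β > 0 with α ≥ β, β ≤ 1, and α + β ≥ 1. Define u(1)=1 and u(n) = max_{1 ≤ k ≤ ⌊n/2⌋}(α u(k) + β u(n−k)) for n ≥ 2. Then the maximum is attained at k = ⌊n/2⌋, so u(n) = α u(⌊n/2⌋) + β u(⌈n/2⌉) = S_{α,β}(n) for all n ≥ 2. -/
section
variable (α β : ℝ) (hα : 0 < α) (hβ : 0 < β)
    (hba : β ≤ α) (hb1 : β ≤ 1) (hab : 1 ≤ α + β)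
    (S : ℕ → ℝ) (hS1 : S 1 = 1)
    (hSrec : ∀ n : ℕ, 2 ≤ n → S n = α * S (n / 2) + β * S ((n + 1) / 2))

include hα hβ hab hS1 hSrec in
lemma aux_ge_one : ∀ n : ℕ, 1 ≤ n → 1 ≤ S n := by
  intro n
  induction n using Nat.strong_induction_on with
  | _ n ih =>
    intro hn
    rcases eq_or_lt_of_le hn with h | h
    · rw [← h, hS1]
    · have h2 : 2 ≤ n := h
      have e := hSrec n h2
      have i1 := ih (n / 2) (by omega) (by omega)
      have i2 := ih ((n + 1) / 2) (by omega) (by omega)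
      nlinarith

include hα hβ hab hS1 hSrec in
lemma aux_mono : ∀ n : ℕ, 1 ≤ n → S n ≤ S (n + 1) := by
  intro n
  induction n using Nat.strong_induction_on with
  | _ n ih =>
    intro hn
    rcases eq_or_lt_of_le hn with h | h
    · have e := hSrec 2 (by norm_num)
      norm_num at e
      rw [← h, hS1, e, hS1]; linarith
    · obtain ⟨j, hj | hj⟩ := Nat.even_or_odd' n
      · -- n = 2j, j ≥ 1
        have hj1 : 1 ≤ j := by omega
        have e1 := hSrec (2 * j) (by omega)
        have e2 := hSrec (2 * j + 1) (by omega)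
        have i1 : (2 * j) / 2 = j := by omega
        have i2 : (2 * j + 1) / 2 = j := by omega
        have i3 : (2 * j + 1 + 1) / 2 = j + 1 := by omega
        rw [i1, i2] at e1
        rw [i2, i3] at e2
        have g := ih j (by omega) hj1
        rw [hj, e1, e2]
        nlinarith
      · -- n = 2j+1, j ≥ 1
        have hj1 : 1 ≤ j := by omega
        have e1 := hSrec (2 * j + 1) (by omega)
        have e2 := hSrec (2 * j + 2) (by omega)
        have i1 : (2 * j + 1) / 2 = j := by omega
        have i2 : (2 * j + 1 + 1) / 2 = j + 1 := by omega
        have i3 : (2 * j + 2) / 2 = j + 1 := by omega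
        have i4 : (2 * j + 2 + 1) / 2 = j + 1 := by omega
        rw [i1, i2] at e1
        rw [i3, i4] at e2
        have g := ih j (by omega) hj1
        have : (2 * j + 1) + 1 = 2 * j + 2 := by omega
        rw [hj, this, e1, e2]
        nlinarith
include hα hβ hba hb1 hab hS1 hSrec in
lemma aux_L : ∀ m : ℕ, 2 ≤ m → α * S (m - 1) + β * S (m + 1) ≤ (α + β) * S m := by
  intro m
  induction m using Nat.strong_induction_on with
  | _ m ih =>
    intro hm
    obtain ⟨j, hj | hj⟩ := Nat.even_or_odd' m
    · -- m = 2j, j ≥ 1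
      have hj1 : 1 ≤ j := by omega
      rcases eq_or_lt_of_le hj1 with h1 | h1
      · -- j = 1, m = 2 : base case
        subst hj; rw [← h1]
        have e2 := hSrec 2 (by norm_num)
        have e3 := hSrec 3 (by norm_num)
        norm_num at e2 e3
        rw [e2, hS1] at e3
        norm_num
        rw [hS1, e3, e2, hS1]
        nlinarith [mul_nonneg (by nlinarith : (0:ℝ) ≤ α - β * β) (by linarith : (0:ℝ) ≤ α + β - 1)]
      · -- j ≥ 2
        have hj2 : 2 ≤ j := h1
        have e1 := hSrec (2 * j - 1) (by omega)
        have e2 := hSrec (2 * j) (by omega)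
        have e3 := hSrec (2 * j + 1) (by omega)
        have i1 : (2 * j - 1) / 2 = j - 1 := by omega
        have i2 : (2 * j - 1 + 1) / 2 = j := by omega
        have i3 : (2 * j) / 2 = j := by omega
        have i4 : (2 * j + 1) / 2 = j := by omega
        have i5 : (2 * j + 1 + 1) / 2 = j + 1 := by omega
        rw [i1, i2] at e1; rw [i3, i4] at e2; rw [i4, i5] at e3
        have g := ih j (by omega) hj2
        have gm : S (j - 1) ≤ S j := by
          have := aux_mono α β hα hβ hab S hS1 hSrec (j - 1) (by omega)
          have hjj : j - 1 + 1 = j := by omega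
          rwa [hjj] at this
        rw [← hj] at e1 e2 e3
        rw [e1, e2, e3]
        nlinarith [mul_le_mul_of_nonneg_left g hβ.le,
          mul_le_mul_of_nonneg_left gm (mul_nonneg hα.le (sub_nonneg.2 hba))]
    · -- m = 2j+1, j ≥ 1 : equality case
      have hj1 : 1 ≤ j := by omega
      have e1 := hSrec (2 * j) (by omega)
      have e2 := hSrec (2 * j + 1) (by omega)
      have e3 := hSrec (2 * j + 2) (by omega)
      have i1 : (2 * j) / 2 = j := by omega
      have i2 : (2 * j + 1) / 2 = j := by omega
      have i3 : (2 * j + 1 + 1) / 2 = j + 1 := by omega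
      have i4 : (2 * j + 2) / 2 = j + 1 := by omega
      have i5 : (2 * j + 2 + 1) / 2 = j + 1 := by omega
      rw [i1, i2] at e1; rw [i2, i3] at e2; rw [i4, i5] at e3
      have hm1 : 2 * j = m - 1 := by omega
      have hm2 : 2 * j + 2 = m + 1 := by omega
      have hm3 : 2 * j + 1 = m := by omega
      rw [hm1] at e1; rw [hm3] at e2; rw [hm2] at e3
      rw [e1, e2, e3]
      nlinarith [sq_nonneg (α - β)]

include hα hβ hba hb1 hab hS1 hSrec in
lemma aux_C : ∀ n : ℕ, 2 ≤ n → α + β * S (n - 1) ≤ S n := by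
  intro n
  induction n using Nat.strong_induction_on with
  | _ n ih =>
    intro hn
    obtain ⟨m, hm | hm⟩ := Nat.even_or_odd' n
    · -- n = 2m, m ≥ 1
      have hm1 : 1 ≤ m := by omega
      rcases eq_or_lt_of_le hm1 with h1 | h1
      · -- n = 2
        subst hm; rw [← h1]
        have e2 := hSrec 2 (by norm_num)
        norm_num at e2 ⊢
        rw [e2, hS1]; linarith
      · have hm2 : 2 ≤ m := h1
        have e1 := hSrec (2 * m - 1) (by omega)
        have e2 := hSrec (2 * m) (by omega)
        have i1 : (2 * m - 1) / 2 = m - 1 := by omega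
        have i2 : (2 * m - 1 + 1) / 2 = m := by omega
        have i3 : (2 * m) / 2 = m := by omega
        have i4 : (2 * m + 1) / 2 = m := by omega
        rw [i1, i2] at e1; rw [i3, i4] at e2
        have g := ih m (by omega) hm2
        have hge := aux_ge_one α β hα hβ hab S hS1 hSrec m (by omega)
        have hn1 : 2 * m - 1 = n - 1 := by omega
        rw [hn1] at e1
        rw [← hm] at e2
        rw [e1, e2]
        nlinarith [mul_le_mul_of_nonneg_left g hα.le,
          mul_nonneg (sub_nonneg.2 hba) (by linarith : (0:ℝ) ≤ α + β - 1),
          mul_le_mul_of_nonneg_left hge (mul_nonneg hβ.le (by linarith : (0:ℝ) ≤ 1 - β))]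
    · -- n = 2m+1, m ≥ 1
      have hm1 : 1 ≤ m := by omega
      have e1 := hSrec (2 * m) (by omega)
      have e2 := hSrec (2 * m + 1) (by omega)
      have i1 : (2 * m) / 2 = m := by omega
      have i2 : (2 * m + 1) / 2 = m := by omega
      have i3 : (2 * m + 1 + 1) / 2 = m + 1 := by omega
      rw [i1, i2] at e1; rw [i2, i3] at e2
      have g := ih (m + 1) (by omega) (by omega)
      have hmm : m + 1 - 1 = m := by omega
      rw [hmm] at g
      have hge := aux_ge_one α β hα hβ hab S hS1 hSrec m (by omega)
      have hn1 : 2 * m = n - 1 := by omega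
      rw [hn1] at e1
      rw [← hm] at e2
      rw [e1, e2]
      nlinarith [mul_le_mul_of_nonneg_left g hβ.le,
        mul_le_mul_of_nonneg_left hge (mul_nonneg hα.le (by linarith : (0:ℝ) ≤ 1 - β))]
include hα hβ hba hb1 hab hS1 hSrec in
lemma aux_G : ∀ n : ℕ, 2 ≤ n → ∀ k : ℕ, 1 ≤ k → k ≤ n / 2 →
    α * S k + β * S (n - k) ≤ S n := by
  intro n
  induction n using Nat.strong_induction_on with
  | _ n ih =>
    intro hn k hk1 hk2
    rcases eq_or_lt_of_le hk2 with heq | hlt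
    · -- k = n/2 : equality
      have e := hSrec n hn
      have i1 : n - k = (n + 1) / 2 := by omega
      exact le_of_eq (by rw [i1, heq, e])
    · rcases eq_or_lt_of_le hk1 with h1 | h1
      · -- k = 1
        have := aux_C α β hα hβ hba hb1 hab S hS1 hSrec n hn
        rw [← h1, hS1]; linarith
      · -- 2 ≤ k < n/2, so n ≥ 6
        have hk2' : 2 ≤ k := h1
        obtain ⟨m, hm | hm⟩ := Nat.even_or_odd' n
        · -- n = 2m
          have e2 := hSrec (2 * m) (by omega)
          have i3 : (2 * m) / 2 = m := by omega
          have i4 : (2 * m + 1) / 2 = m := by omega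
          rw [i3, i4] at e2
          obtain ⟨a, ha | ha⟩ := Nat.even_or_odd' k
          · -- k = 2a
            have ha1 : 1 ≤ a := by omega
            have eK := hSrec (2 * a) (by omega)
            have j1 : (2 * a) / 2 = a := by omega
            have j2 : (2 * a + 1) / 2 = a := by omega
            rw [j1, j2] at eK
            have eNK := hSrec (2 * (m - a)) (by omega)
            have j3 : (2 * (m - a)) / 2 = m - a := by omega
            have j4 : (2 * (m - a) + 1) / 2 = m - a := by omega
            rw [j3, j4] at eNK
            have jnk : n - k = 2 * (m - a) := by omega
            have g := ih m (by omega) (by omega) a ha1 (by omega)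
            rw [jnk, hm, ha, eK, eNK, e2]
            nlinarith [mul_le_mul_of_nonneg_left g (by positivity : (0:ℝ) ≤ α + β)]
          · -- k = 2a+1
            have ha1 : 1 ≤ a := by omega
            have hm4 : 4 ≤ m := by omega
            have eK := hSrec (2 * a + 1) (by omega)
            have j1 : (2 * a + 1) / 2 = a := by omega
            have j2 : (2 * a + 1 + 1) / 2 = a + 1 := by omega
            rw [j1, j2] at eK
            have eNK := hSrec (2 * (m - a - 1) + 1) (by omega)
            have j3 : (2 * (m - a - 1) + 1) / 2 = m - a - 1 := by omega
            have j4 : (2 * (m - a - 1) + 1 + 1) / 2 = m - a := by omega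
            rw [j3, j4] at eNK
            have jnk : n - k = 2 * (m - a - 1) + 1 := by omega
            have g1 := ih (m - 1) (by omega) (by omega) a ha1 (by omega)
            have j5 : m - 1 - a = m - a - 1 := by omega
            rw [j5] at g1
            have g2 := ih (m + 1) (by omega) (by omega) (a + 1) (by omega) (by omega)
            have j6 : m + 1 - (a + 1) = m - a := by omega
            rw [j6] at g2
            have g3 := aux_L α β hα hβ hba hb1 hab S hS1 hSrec m (by omega)
            rw [jnk, hm, ha, eK, eNK, e2]
            nlinarith [mul_le_mul_of_nonneg_left g1 hα.le,
              mul_le_mul_of_nonneg_left g2 hβ.le]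
        · -- n = 2m+1
          have hm2 : 2 ≤ m := by omega
          have e2 := hSrec (2 * m + 1) (by omega)
          have i3 : (2 * m + 1) / 2 = m := by omega
          have i4 : (2 * m + 1 + 1) / 2 = m + 1 := by omega
          rw [i3, i4] at e2
          obtain ⟨a, ha | ha⟩ := Nat.even_or_odd' k
          · -- k = 2a
            have ha1 : 1 ≤ a := by omega
            have eK := hSrec (2 * a) (by omega)
            have j1 : (2 * a) / 2 = a := by omega
            have j2 : (2 * a + 1) / 2 = a := by omega
            rw [j1, j2] at eK
            have eNK := hSrec (2 * (m - a) + 1) (by omega)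
            have j3 : (2 * (m - a) + 1) / 2 = m - a := by omega
            have j4 : (2 * (m - a) + 1 + 1) / 2 = m - a + 1 := by omega
            rw [j3, j4] at eNK
            have jnk : n - k = 2 * (m - a) + 1 := by omega
            have g1 := ih m (by omega) (by omega) a ha1 (by omega)
            have g2 := ih (m + 1) (by omega) (by omega) a ha1 (by omega)
            have j6 : m + 1 - a = m - a + 1 := by omega
            rw [j6] at g2
            rw [jnk, hm, ha, eK, eNK, e2]
            nlinarith [mul_le_mul_of_nonneg_left g1 hα.le,
              mul_le_mul_of_nonneg_left g2 hβ.le]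
          · -- k = 2a+1
            have ha1 : 1 ≤ a := by omega
            have eK := hSrec (2 * a + 1) (by omega)
            have j1 : (2 * a + 1) / 2 = a := by omega
            have j2 : (2 * a + 1 + 1) / 2 = a + 1 := by omega
            rw [j1, j2] at eK
            have eNK := hSrec (2 * (m - a)) (by omega)
            have j3 : (2 * (m - a)) / 2 = m - a := by omega
            have j4 : (2 * (m - a) + 1) / 2 = m - a := by omega
            rw [j3, j4] at eNK
            have jnk : n - k = 2 * (m - a) := by omega
            have g1 := ih m (by omega) (by omega) a ha1 (by omega)
            have g2 := ih (m + 1) (by omega) (by omega) (a + 1) (by omega) (by omega)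
            have j6 : m + 1 - (a + 1) = m - a := by omega
            rw [j6] at g2
            rw [jnk, hm, ha, eK, eNK, e2]
            nlinarith [mul_le_mul_of_nonneg_left g1 hα.le,
              mul_le_mul_of_nonneg_left g2 hβ.le]
end

/-- Let `α, β > 0` with `α ≥ β`, `β ≤ 1`, `α + β ≥ 1`.  If `u(1) = 1` and
`u(n) = max_{1≤k≤⌊n/2⌋}(α u(k) + β u(n−k))` for `n ≥ 2`, then the maximum is
attained at `k = ⌊n/2⌋`, i.e. `u(n) = α u(⌊n/2⌋) + β u(⌈n/2⌉)`, and `u = S_{α,β}`. -/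
theorem max_recurrence (α β : ℝ) (hα : 0 < α) (hβ : 0 < β)
    (hba : β ≤ α) (hb1 : β ≤ 1) (hab : 1 ≤ α + β)
    (u : ℕ → ℝ) (hu1 : u 1 = 1)
    (hurec : ∀ n : ℕ, 2 ≤ n →
      IsGreatest {x : ℝ | ∃ k : ℕ, 1 ≤ k ∧ k ≤ n / 2 ∧ x = α * u k + β * u (n - k)} (u n))
    (S : ℕ → ℝ) (hS1 : S 1 = 1)
    (hSrec : ∀ n : ℕ, 2 ≤ n → S n = α * S (n / 2) + β * S ((n + 1) / 2)) :
    (∀ n : ℕ, 2 ≤ n → u n = α * u (n / 2) + β * u ((n + 1) / 2)) ∧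
    ∀ n : ℕ, 1 ≤ n → u n = S n := by
  have key : ∀ n : ℕ, 1 ≤ n → u n = S n := by
    intro n
    induction n using Nat.strong_induction_on with
    | _ n ih =>
      intro hn
      rcases eq_or_lt_of_le hn with h1 | h1
      · rw [← h1, hu1, hS1]
      · have hn2 : 2 ≤ n := h1
        obtain ⟨⟨k0, hk01, hk02, hx⟩, hub⟩ := hurec n hn2
        -- upper bound: u n ≤ S n
        have hup : u n ≤ S n := by
          rw [hx, ih k0 (by omega) (by omega), ih (n - k0) (by omega) (by omega)]
          exact aux_G α β hα hβ hba hb1 hab S hS1 hSrec n hn2 k0 hk01 hk02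
        -- lower bound
        have hmem : α * u (n / 2) + β * u (n - n / 2) ≤ u n :=
          hub ⟨n / 2, by omega, le_refl _, rfl⟩
        have i1 : n - n / 2 = (n + 1) / 2 := by omega
        rw [i1, ih (n / 2) (by omega) (by omega),
            ih ((n + 1) / 2) (by omega) (by omega), ← hSrec n hn2] at hmem
        linarith
  refine ⟨?_, key⟩
  intro n hn
  rw [key n (by omega), key (n / 2) (by omega), key ((n + 1) / 2) (by omega)]
  exact hSrec n hn
end

section
/- For every n ≥ 1 there exists a bijection h : {1,…,n} → {n+1,…,2n} such that for each k, h(k) − k is a power of 2 (i.e., h(k) = k + 2^{j} for some j ≥ 0 depending on k). Likewise there exists a bijection from {1,…,n} to {n+2,…,2n+1} with the same property. -/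
/-- Key lemma: for any shift `a`, any `n ≥ 1` and `ε ∈ {0,1}`, there is a bijection
from `[a+1, a+n]` onto `[a+n+ε+1, a+2n+ε]` moving each element by a power of 2. -/
lemma pairing_key : ∀ n : ℕ, 1 ≤ n → ∀ ε : ℕ, ε ≤ 1 → ∀ a : ℕ, ∃ f : ℕ → ℕ,
    Set.BijOn f (Set.Icc (a + 1) (a + n)) (Set.Icc (a + n + ε + 1) (a + 2 * n + ε)) ∧
    ∀ k ∈ Set.Icc (a + 1) (a + n), ∃ j : ℕ, f k = k + 2 ^ j := by
  intro n
  induction n using Nat.strong_induction_on with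
  | _ n IH =>
    intro hn ε hε a
    obtain ⟨m, hm⟩ : ∃ m, m = n + ε := ⟨_, rfl⟩
    obtain ⟨P, hPdef⟩ : ∃ P, P = 2 ^ Nat.clog 2 m := ⟨_, rfl⟩
    have hmP : m ≤ P := hPdef ▸ Nat.le_pow_clog one_lt_two m
    rcases eq_or_lt_of_le hmP with hbase | hlt
    · -- base case: m itself is a power of 2; shift by m
      refine ⟨fun k => k + m, ⟨?_, ?_, ?_⟩, ?_⟩
      · intro k hk
        simp only [Set.mem_Icc] at *
        omega
      · intro x _ y _ h
        simp only at h
        omega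
      · intro y hy
        simp only [Set.mem_Icc] at hy
        refine ⟨y - m, ?_, ?_⟩
        · simp only [Set.mem_Icc]; omega
        · simp only; omega
      · intro k _
        exact ⟨Nat.clog 2 m, by simp only; omega⟩
    · -- recursive case
      have hm2 : 2 ≤ m := by
        rcases Nat.lt_or_ge m 2 with h | h
        · exfalso
          have hm1 : m = 1 := by omega
          rw [hm1, Nat.clog_one_right, pow_zero] at hPdef
          omega
        · exact h
      have hj0pos : 1 ≤ Nat.clog 2 m := Nat.clog_pos one_lt_two (by omega)
      have hhalf : 2 ^ (Nat.clog 2 m - 1) < m := by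
        have := Nat.pow_pred_clog_lt_self one_lt_two (show 1 < m by omega) (b := 2)
        simpa [Nat.pred_eq_sub_one] using this
      have hP2m : P < 2 * m := by
        have hP' : P = 2 * 2 ^ (Nat.clog 2 m - 1) := by
          rw [hPdef, ← pow_succ']
          congr 1
          omega
        omega
      have hPeven : ε = 1 → 2 ∣ P := by
        intro _
        rw [hPdef]
        exact dvd_pow_self 2 (by omega)
      have hPmn : P < m + n := by
        rcases Nat.eq_or_lt_of_le hε with h1 | h0
        · have hdvd := hPeven h1
          omega
        · omega
      obtain ⟨t, ht⟩ : ∃ t, t = m + n - P := ⟨_, rfl⟩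
      obtain ⟨n', hn'⟩ : ∃ n', n' = P - m := ⟨_, rfl⟩
      have htn : 1 ≤ t ∧ t + 1 ≤ n := by omega
      have hn'n : 1 ≤ n' ∧ n' < n := by omega
      obtain ⟨g, ⟨gmap, ginj, gsurj⟩, gpow⟩ := IH n' hn'n.2 hn'n.1 ε hε (a + t)
      have htgt2 : a + t + 2 * n' + ε = a + P := by omega
      have htgt1 : a + t + n' + ε + 1 = a + m + 1 := by omega
      have hdom : a + t + n' = a + n := by omega
      rw [htgt2, htgt1, hdom] at gmap gsurj
      rw [hdom] at ginj
      rw [hdom] at gpow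
      refine ⟨fun k => if k ≤ a + t then k + P else g k, ⟨?_, ?_, ?_⟩, ?_⟩
      · -- MapsTo
        intro k hk
        simp only [Set.mem_Icc] at hk ⊢
        by_cases h : k ≤ a + t
        · simp only [if_pos h]
          omega
        · simp only [if_neg h]
          have := gmap (Set.mem_Icc.mpr ⟨by omega, hk.2⟩)
          simp only [Set.mem_Icc] at this
          omega
      · -- InjOn
        intro x hx y hy hxy
        simp only [Set.mem_Icc] at hx hy
        by_cases h1 : x ≤ a + t <;> by_cases h2 : y ≤ a + t <;>
          simp only [h1, h2, if_true, if_false, if_pos, if_neg, not_false_iff] at hxy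
        · omega
        · have := gmap (Set.mem_Icc.mpr ⟨by omega, hy.2⟩)
          simp only [Set.mem_Icc] at this
          omega
        · have := gmap (Set.mem_Icc.mpr ⟨by omega, hx.2⟩)
          simp only [Set.mem_Icc] at this
          omega
        · exact ginj (Set.mem_Icc.mpr ⟨by omega, hx.2⟩)
            (Set.mem_Icc.mpr ⟨by omega, hy.2⟩) hxy
      · -- SurjOn
        intro y hy
        simp only [Set.mem_Icc] at hy
        by_cases h : y ≤ a + P
        · obtain ⟨k, hk, hgk⟩ := gsurj (Set.mem_Icc.mpr ⟨by omega, h⟩)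
          simp only [Set.mem_Icc] at hk
          refine ⟨k, Set.mem_Icc.mpr ⟨by omega, hk.2⟩, ?_⟩
          simp only [if_neg (by omega : ¬ k ≤ a + t)]
          exact hgk
        · refine ⟨y - P, Set.mem_Icc.mpr ⟨by omega, by omega⟩, ?_⟩
          simp only [if_pos (by omega : y - P ≤ a + t)]
          omega
      · -- powers of two
        intro k hk
        simp only [Set.mem_Icc] at hk
        by_cases h : k ≤ a + t
        · exact ⟨Nat.clog 2 m, by simp only [if_pos h]; omega⟩
        · obtain ⟨j, hj⟩ := gpow k (Set.mem_Icc.mpr ⟨by omega, hk.2⟩)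
          exact ⟨j, by simp only [if_neg h]; exact hj⟩

/-- For every `n ≥ 1` there is a bijection `h₁ : {1,…,n} → {n+1,…,2n}` with
`h₁(k) − k` a power of `2` for each `k`, and likewise a bijection
`h₂ : {1,…,n} → {n+2,…,2n+1}` with the same property. -/
theorem pairing_powers_of_two (n : ℕ) (hn : 1 ≤ n) :
    (∃ h₁ : ℕ → ℕ,
      Set.BijOn h₁ (Set.Icc 1 n) (Set.Icc (n + 1) (2 * n)) ∧
      ∀ k ∈ Set.Icc 1 n, ∃ j : ℕ, h₁ k = k + 2 ^ j) ∧
    (∃ h₂ : ℕ → ℕ,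
      Set.BijOn h₂ (Set.Icc 1 n) (Set.Icc (n + 2) (2 * n + 1)) ∧
      ∀ k ∈ Set.Icc 1 n, ∃ j : ℕ, h₂ k = k + 2 ^ j) := by
  constructor
  · obtain ⟨f, hf1, hf2⟩ := pairing_key n hn 0 (by norm_num) 0
    exact ⟨f, by simpa using hf1, by simpa using hf2⟩
  · obtain ⟨f, hf1, hf2⟩ := pairing_key n hn 1 (le_refl 1) 0
    exact ⟨f, by simpa using hf1, by simpa using hf2⟩
end
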